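/- arXiv:1806.00632 — 5 statements merged into one kernel-verified Lean document; each statement's English description precedes it below -/
import Mathlib

section
/- If MPVC-generalized quasinormality holds at a feasible point x* ∈ C, then a local error bound holds: there exist δ > 0 and c > 0 such that for every x ∈ ℝ^n with ‖x − x*‖₁ < δ/2, dist₁(x, C) ≤ c·(Σ_{j=1}^l |h_j(x)| + Σ_{i=1}^m max{0, g_i(x)} + Σ_{i=1}^q dist₁((G_i(x), H_i(x)), Ω)), where dist₁ denotes distance with respect to the ℓ¹-norm and Ω = {(a,b) ∈ ℝ² : b ≥ 0 and ab ≤ 0}. -/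
open Filter Topology

/-- The MPVC feasible set
`C = {x | g i x ≤ 0, h j x = 0, H i x ≥ 0, G i x * H i x ≤ 0}`. -/
def feasSet {n m l q : ℕ} (g : Fin m → (Fin n → ℝ) → ℝ) (h : Fin l → (Fin n → ℝ) → ℝ)
    (G H : Fin q → (Fin n → ℝ) → ℝ) : Set (Fin n → ℝ) :=
  {x | (∀ i, g i x ≤ 0) ∧ (∀ j, h j x = 0) ∧ (∀ i, 0 ≤ H i x) ∧ (∀ i, G i x * H i x ≤ 0)}

/-- Conditions (i)–(ii) on an MPVC multiplier `(lam, mu, etaG, etaH)` at a feasible point. -/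
def MultCond {n m l q : ℕ} (g : Fin m → (Fin n → ℝ) → ℝ) (h : Fin l → (Fin n → ℝ) → ℝ)
    (G H : Fin q → (Fin n → ℝ) → ℝ) (xs : Fin n → ℝ)
    (lam : Fin m → ℝ) (mu : Fin l → ℝ) (etaG etaH : Fin q → ℝ) : Prop :=
  ((∑ i, lam i • fderiv ℝ (g i) xs) + (∑ j, mu j • fderiv ℝ (h j) xs)
      + (∑ i, etaG i • fderiv ℝ (G i) xs) - (∑ i, etaH i • fderiv ℝ (H i) xs) = 0)
  ∧ (∀ i, g i xs = 0 → 0 ≤ lam i)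
  ∧ (∀ i, g i xs ≠ 0 → lam i = 0)
  ∧ (∀ i, (0 < H i xs ∧ G i xs < 0) ∨ (H i xs = 0 ∧ G i xs < 0) ∨ (H i xs = 0 ∧ 0 < G i xs) →
      etaG i = 0)
  ∧ (∀ i, (0 < H i xs ∧ G i xs = 0) ∨ (H i xs = 0 ∧ G i xs = 0) → 0 ≤ etaG i)
  ∧ (∀ i, 0 < H i xs → etaH i = 0)
  ∧ (∀ i, H i xs = 0 ∧ G i xs < 0 → 0 ≤ etaH i)
  ∧ (∀ i, H i xs = 0 ∧ G i xs = 0 → etaH i * etaG i = 0)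

/-- MPVC-generalized quasinormality at a feasible point `xs`: there is no nonzero multiplier
satisfying (i)–(ii) together with the sequence condition (iii). -/
def GenQuasinormal {n m l q : ℕ} (g : Fin m → (Fin n → ℝ) → ℝ) (h : Fin l → (Fin n → ℝ) → ℝ)
    (G H : Fin q → (Fin n → ℝ) → ℝ) (xs : Fin n → ℝ) : Prop :=
  ¬ ∃ (lam : Fin m → ℝ) (mu : Fin l → ℝ) (etaG etaH : Fin q → ℝ),
      (lam ≠ 0 ∨ mu ≠ 0 ∨ etaG ≠ 0 ∨ etaH ≠ 0)
      ∧ MultCond g h G H xs lam mu etaG etaH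
      ∧ ∃ xk : ℕ → (Fin n → ℝ), Tendsto xk atTop (𝓝 xs) ∧ ∀ k,
          (∀ i, 0 < lam i → 0 < lam i * g i (xk k))
          ∧ (∀ j, mu j ≠ 0 → 0 < mu j * h j (xk k))
          ∧ (∀ i, etaH i ≠ 0 → etaH i * H i (xk k) < 0)
          ∧ (∀ i, 0 < etaG i → 0 < etaG i * G i (xk k))

/-- The set `Ω = {(a,b) ∈ ℝ² : b ≥ 0, ab ≤ 0}` describing a single vanishing constraint pair. -/
def OmegaVC : Set (ℝ × ℝ) := {p | 0 ≤ p.2 ∧ p.1 * p.2 ≤ 0}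

/-- The ℓ¹-distance from a point `x ∈ ℝⁿ` to a set `S ⊆ ℝⁿ`. -/
noncomputable def l1DistSet {n : ℕ} (x : Fin n → ℝ) (S : Set (Fin n → ℝ)) : ℝ :=
  sInf ((fun y => ∑ i, |x i - y i|) '' S)

/-- The ℓ¹-distance from a point of `ℝ²` to the set `Ω`. -/
noncomputable def l1DistOmega (p : ℝ × ℝ) : ℝ :=
  sInf ((fun w => |p.1 - w.1| + |p.2 - w.2|) '' OmegaVC)

namespace MPVCaux

lemma maxsq_hasDerivAt (t : ℝ) : HasDerivAt (fun s : ℝ => max 0 s ^ 2) (2 * max 0 t) t := by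
  rcases lt_trichotomy t 0 with ht | ht | ht
  · have hev : (fun s : ℝ => max 0 s ^ 2) =ᶠ[𝓝 t] (fun _ => (0:ℝ)) := by
      filter_upwards [Iio_mem_nhds ht] with s hs
      have : s < 0 := hs
      simp [max_eq_left this.le]
    have h2 := (hasDerivAt_const t (0:ℝ)).congr_of_eventuallyEq hev
    simpa [max_eq_left ht.le] using h2
  · subst ht
    rw [hasDerivAt_iff_tendsto_slope]
    have hb : ∀ s : ℝ, ‖slope (fun s : ℝ => max 0 s ^ 2) 0 s‖ ≤ |s| := by
      intro s
      simp only [slope, vsub_eq_sub, sub_zero, Real.norm_eq_abs, smul_eq_mul]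
      rcases le_or_gt s 0 with h | h
      · simp [max_eq_left h, abs_nonneg]
      · have : s⁻¹ * (max 0 s ^ 2 - max 0 0 ^ 2) = s := by
          rw [max_eq_right h.le]; field_simp; simp
        rw [this]
      
    have hlim : Tendsto (fun s : ℝ => |s|) (𝓝[≠] (0:ℝ)) (𝓝 0) :=
      (continuous_abs.tendsto' 0 0 (by simp)).mono_left nhdsWithin_le_nhds
    have := squeeze_zero_norm hb hlim
    simpa using this
  · have hev : (fun s : ℝ => max 0 s ^ 2) =ᶠ[𝓝 t] (fun s => s ^ 2) := by
      filter_upwards [Ioi_mem_nhds ht] with s hs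
      have : (0:ℝ) < s := hs
      simp [max_eq_right this.le]
    have h2 := (hasDerivAt_pow 2 t).congr_of_eventuallyEq hev
    simpa [max_eq_right ht.le, mul_comm] using h2

lemma negmaxsq_hasDerivAt (t : ℝ) :
    HasDerivAt (fun s : ℝ => max 0 (-s) ^ 2) (-(2 * max 0 (-t))) t := by
  have h := (maxsq_hasDerivAt (-t)).comp t (hasDerivAt_neg t)
  simpa [mul_comm, Function.comp_def] using h


lemma abs_deriv_le {f : ℝ → ℝ} {d σ : ℝ} (hf : HasDerivAt f d 0)
    (hmin : ∀ᶠ τ in 𝓝 (0:ℝ), f 0 - σ * |τ| ≤ f τ) : |d| ≤ σ := by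
  have hslope := hasDerivAt_iff_tendsto_slope.1 hf
  rw [abs_le]
  constructor
  · have h1 : Tendsto (slope f 0) (𝓝[>] 0) (𝓝 d) :=
      hslope.mono_left (nhdsWithin_mono _ (fun s hs => ne_of_gt hs))
    refine ge_of_tendsto h1 ?_
    filter_upwards [hmin.filter_mono nhdsWithin_le_nhds, self_mem_nhdsWithin] with τ h1' h2'
    have hτ : (0:ℝ) < τ := h2'
    rw [abs_of_pos hτ] at h1'
    simp only [slope, vsub_eq_sub, sub_zero, smul_eq_mul]
    have h3 : τ⁻¹ * (-σ * τ) ≤ τ⁻¹ * (f τ - f 0) :=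
      mul_le_mul_of_nonneg_left (by linarith) (inv_nonneg.2 hτ.le)
    have h4 : τ⁻¹ * (-σ * τ) = -σ := by field_simp
    linarith
  · have h1 : Tendsto (slope f 0) (𝓝[<] 0) (𝓝 d) :=
      hslope.mono_left (nhdsWithin_mono _ (fun s hs => ne_of_lt hs))
    refine le_of_tendsto h1 ?_
    filter_upwards [hmin.filter_mono nhdsWithin_le_nhds, self_mem_nhdsWithin] with τ h1' h2'
    have hτ : τ < (0:ℝ) := h2'
    rw [abs_of_neg hτ] at h1'
    simp only [slope, vsub_eq_sub, sub_zero, smul_eq_mul]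
    have h3 : τ⁻¹ * (f τ - f 0) ≤ τ⁻¹ * (σ * τ) := by
      apply mul_le_mul_of_nonpos_left (by linarith) (by simp [inv_nonpos]; exact hτ.le)
    have h4 : τ⁻¹ * (σ * τ) = σ := by rw [mul_comm σ τ, ← mul_assoc, inv_mul_cancel₀ hτ.ne, one_mul]
    linarith

lemma sum_sq_le {α : Type*} (s : Finset α) (f : α → ℝ) (hf : ∀ a ∈ s, 0 ≤ f a) :
    (∑ a ∈ s, f a ^ 2) ≤ (∑ a ∈ s, f a) ^ 2 := by
  calc (∑ a ∈ s, f a ^ 2) = ∑ a ∈ s, f a * f a := by simp [sq]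
    _ ≤ ∑ a ∈ s, f a * (∑ b ∈ s, f b) :=
        Finset.sum_le_sum (fun a ha =>
          mul_le_mul_of_nonneg_left (Finset.single_le_sum hf ha) (hf a ha))
    _ = (∑ a ∈ s, f a) ^ 2 := by rw [← Finset.sum_mul]; ring

lemma l1DistOmega_eq (a b : ℝ) : l1DistOmega (a, b) = max 0 (min a b) + max 0 (-b) := by
  have hbdd : BddBelow ((fun w : ℝ × ℝ => |a - w.1| + |b - w.2|) '' OmegaVC) := by
    refine ⟨0, ?_⟩
    rintro z ⟨w, _, rfl⟩
    positivity
  apply le_antisymm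
  · rcases lt_or_ge b 0 with hb | hb
    · have hmem : ((a, 0) : ℝ × ℝ) ∈ OmegaVC := ⟨le_refl 0, by simp⟩
      calc l1DistOmega (a, b) ≤ |a - a| + |b - 0| := csInf_le hbdd ⟨(a,0), hmem, rfl⟩
        _ = max 0 (min a b) + max 0 (-b) := by
            rw [max_eq_left (by simp [min_le_iff]; right; linarith : min a b ≤ 0),
              max_eq_right (by linarith : (0:ℝ) ≤ -b)]
            simp [abs_of_neg hb]
    · rcases le_or_gt a 0 with ha | ha
      · have hmem : ((a, b) : ℝ × ℝ) ∈ OmegaVC := ⟨hb, mul_nonpos_iff.2 (Or.inr ⟨ha, hb⟩)⟩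
        calc l1DistOmega (a, b) ≤ |a - a| + |b - b| := csInf_le hbdd ⟨(a,b), hmem, rfl⟩
          _ = max 0 (min a b) + max 0 (-b) := by
              rw [max_eq_left ((min_le_left a b).trans ha), max_eq_left (by linarith)]
              simp
      · rcases le_total a b with hab | hab
        · have hmem : ((0, b) : ℝ × ℝ) ∈ OmegaVC := ⟨hb, by simp⟩
          calc l1DistOmega (a, b) ≤ |a - 0| + |b - b| := csInf_le hbdd ⟨(0,b), hmem, rfl⟩
            _ = max 0 (min a b) + max 0 (-b) := by
                rw [min_eq_left hab, max_eq_right ha.le, max_eq_left (by linarith)]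
                simp [abs_of_pos ha]
        · have hmem : ((a, 0) : ℝ × ℝ) ∈ OmegaVC := ⟨le_refl 0, by simp⟩
          calc l1DistOmega (a, b) ≤ |a - a| + |b - 0| := csInf_le hbdd ⟨(a,0), hmem, rfl⟩
            _ = max 0 (min a b) + max 0 (-b) := by
                rw [min_eq_right hab, max_eq_right hb, max_eq_left (by linarith)]
                simp [abs_of_nonneg hb]
  · refine le_csInf ⟨_, ⟨(0,0), ⟨le_refl 0, by simp⟩, rfl⟩⟩ ?_
    rintro z ⟨⟨w1, w2⟩, ⟨hw2, hw12⟩, rfl⟩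
    simp only
    rcases le_or_gt w1 0 with h1 | h1
    · have e1 : max 0 (min a b) ≤ |a - w1| :=
        max_le (abs_nonneg _) ((min_le_left a b).trans ((by linarith : a ≤ a - w1).trans (le_abs_self _)))
      have e2 : max 0 (-b) ≤ |b - w2| :=
        max_le (abs_nonneg _) (by simp only at hw2; linarith [neg_le_abs (b - w2)])
      linarith
    · have hw2' : w2 = 0 := le_antisymm (by nlinarith) hw2
      subst hw2'
      have hid : |b - 0| = max 0 b + max 0 (-b) := by
        rcases le_total 0 b with h | h
        · rw [max_eq_right h, max_eq_left (by linarith)]; simp [abs_of_nonneg h]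
        · rw [max_eq_left h, max_eq_right (by linarith)]; simp [abs_of_nonpos h]
      have e1 : max 0 (min a b) ≤ |a - w1| + max 0 b :=
        max_le (by positivity) ((min_le_right a b).trans (le_trans (le_max_right 0 b)
          (by linarith [abs_nonneg (a - w1)])))
      rw [hid]
      linarith [e1]

variable {n m l q : ℕ} (g : Fin m → (Fin n → ℝ) → ℝ) (h : Fin l → (Fin n → ℝ) → ℝ)
    (G H : Fin q → (Fin n → ℝ) → ℝ)

/-- ℓ¹ residual. -/
noncomputable def resid (x : Fin n → ℝ) : ℝ :=
  (∑ j, |h j x|) + (∑ i, max 0 (g i x)) +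
    ∑ i, (max 0 (min (G i x) (H i x)) + max 0 (-(H i x)))

/-- squared residual. -/
noncomputable def residR (x : Fin n → ℝ) : ℝ :=
  (∑ j, (h j x)^2) + (∑ i, (max 0 (g i x))^2) +
    ∑ i, min ((max 0 (G i x))^2 + (max 0 (-(H i x)))^2) ((H i x)^2)

lemma psi_nonneg (a b : ℝ) : 0 ≤ max 0 (min a b) + max 0 (-b) :=
  add_nonneg (le_max_left _ _) (le_max_left _ _)

lemma resid_nonneg (x : Fin n → ℝ) : 0 ≤ resid g h G H x := by
  unfold resid
  have h1 : (0:ℝ) ≤ ∑ j, |h j x| := Finset.sum_nonneg fun j _ => abs_nonneg _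
  have h2 : (0:ℝ) ≤ ∑ i, max 0 (g i x) := Finset.sum_nonneg fun i _ => le_max_left _ _
  have h3 : (0:ℝ) ≤ ∑ i, (max 0 (min (G i x) (H i x)) + max 0 (-(H i x))) :=
    Finset.sum_nonneg fun i _ => psi_nonneg _ _
  linarith

lemma Dmin_nonneg (a b : ℝ) : 0 ≤ min ((max 0 a)^2 + (max 0 (-b))^2) (b^2) :=
  le_min (by positivity) (by positivity)

lemma residR_nonneg (x : Fin n → ℝ) : 0 ≤ residR g h G H x := by
  unfold residR
  have h1 : (0:ℝ) ≤ ∑ j, (h j x)^2 := Finset.sum_nonneg fun j _ => by positivity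
  have h2 : (0:ℝ) ≤ ∑ i, (max 0 (g i x))^2 := Finset.sum_nonneg fun i _ => by positivity
  have h3 : (0:ℝ) ≤ ∑ i, min ((max 0 (G i x))^2 + (max 0 (-(H i x)))^2) ((H i x)^2) :=
    Finset.sum_nonneg fun i _ => Dmin_nonneg _ _
  linarith

lemma Dmin_le_psi_sq (a b : ℝ) :
    min ((max 0 a)^2 + (max 0 (-b))^2) (b^2) ≤ (max 0 (min a b) + max 0 (-b))^2 := by
  rcases lt_or_ge b 0 with hb | hb
  · refine (min_le_right _ _).trans ?_
    have h1 : -b ≤ max 0 (min a b) + max 0 (-b) :=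
      le_add_of_nonneg_of_le (le_max_left _ _) (le_max_right _ _)
    nlinarith [psi_nonneg a b]
  · rw [max_eq_left (by linarith : -b ≤ 0)]
    rcases le_or_gt a 0 with ha | ha
    · refine (min_le_left _ _).trans ?_
      rw [max_eq_left ha, max_eq_left (min_le_of_left_le ha)]
      norm_num
    · rw [max_eq_right ha.le] at *
      rw [max_eq_right (le_min ha.le hb)]
      rcases le_total a b with hab | hab
      · rw [min_eq_left hab]
        exact (min_le_left _ _).trans (by nlinarith)
      · rw [min_eq_right hab]
        exact (min_le_right _ _).trans (by nlinarith)

lemma sum_sq_le' {α : Type*} (s : Finset α) (f : α → ℝ) (hf : ∀ a ∈ s, 0 ≤ f a) :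
    (∑ a ∈ s, f a ^ 2) ≤ (∑ a ∈ s, f a) ^ 2 := by
  calc (∑ a ∈ s, f a ^ 2) = ∑ a ∈ s, f a * f a := by simp [sq]
    _ ≤ ∑ a ∈ s, f a * (∑ b ∈ s, f b) :=
        Finset.sum_le_sum (fun a ha =>
          mul_le_mul_of_nonneg_left (Finset.single_le_sum hf ha) (hf a ha))
    _ = (∑ a ∈ s, f a) ^ 2 := by rw [← Finset.sum_mul]; ring

lemma residR_le_sq (x : Fin n → ℝ) : residR g h G H x ≤ (resid g h G H x)^2 := by
  unfold residR resid
  have e1 : (∑ j, (h j x)^2) ≤ (∑ j, |h j x|)^2 := by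
    calc (∑ j, (h j x)^2) = ∑ j, |h j x|^2 := by simp [sq_abs]
      _ ≤ _ := sum_sq_le' _ _ (fun j _ => abs_nonneg _)
  have e2 : (∑ i, (max 0 (g i x))^2) ≤ (∑ i, max 0 (g i x))^2 :=
    sum_sq_le' _ _ (fun i _ => le_max_left _ _)
  have e3 : (∑ i, min ((max 0 (G i x))^2 + (max 0 (-(H i x)))^2) ((H i x)^2))
      ≤ (∑ i, (max 0 (min (G i x) (H i x)) + max 0 (-(H i x))))^2 := by
    calc _ ≤ ∑ i, (max 0 (min (G i x) (H i x)) + max 0 (-(H i x)))^2 :=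
          Finset.sum_le_sum (fun i _ => Dmin_le_psi_sq _ _)
      _ ≤ _ := sum_sq_le' _ _ (fun i _ => psi_nonneg _ _)
  have p1 : (0:ℝ) ≤ ∑ j, |h j x| := Finset.sum_nonneg fun j _ => abs_nonneg _
  have p2 : (0:ℝ) ≤ ∑ i, max 0 (g i x) := Finset.sum_nonneg fun i _ => le_max_left _ _
  have p3 : (0:ℝ) ≤ ∑ i, (max 0 (min (G i x) (H i x)) + max 0 (-(H i x))) :=
    Finset.sum_nonneg fun i _ => psi_nonneg _ _
  nlinarith

lemma psi_zero_feas {a b : ℝ} (hab : max 0 (min a b) + max 0 (-b) = 0) :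
    0 ≤ b ∧ a * b ≤ 0 := by
  have h1 : max 0 (min a b) = 0 ∧ max 0 (-b) = 0 := by
    constructor <;> nlinarith [le_max_left (0:ℝ) (min a b), le_max_left (0:ℝ) (-b),
      le_max_right (0:ℝ) (min a b), le_max_right (0:ℝ) (-b)]
  have hb : 0 ≤ b := by nlinarith [le_max_right (0:ℝ) (-b), h1.2]
  have hmin : min a b ≤ 0 := by nlinarith [le_max_right (0:ℝ) (min a b), h1.1]
  refine ⟨hb, ?_⟩
  rcases le_or_gt a 0 with ha | ha
  · exact mul_nonpos_iff.2 (Or.inr ⟨ha, hb⟩)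
  · have : b ≤ 0 := by rcases min_le_iff.1 hmin with h | h <;> linarith
    have : b = 0 := le_antisymm this hb
    simp [this]

lemma feas_of_resid_eq_zero {x : Fin n → ℝ} (hx : resid g h G H x = 0) :
    x ∈ feasSet g h G H := by
  unfold resid at hx
  have p1 : (0:ℝ) ≤ ∑ j, |h j x| := Finset.sum_nonneg fun j _ => abs_nonneg _
  have p2 : (0:ℝ) ≤ ∑ i, max 0 (g i x) := Finset.sum_nonneg fun i _ => le_max_left _ _
  have p3 : (0:ℝ) ≤ ∑ i, (max 0 (min (G i x) (H i x)) + max 0 (-(H i x))) :=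
    Finset.sum_nonneg fun i _ => psi_nonneg _ _
  have e1 : ∑ j, |h j x| = 0 := by linarith
  have e2 : ∑ i, max 0 (g i x) = 0 := by linarith
  have e3 : ∑ i, (max 0 (min (G i x) (H i x)) + max 0 (-(H i x))) = 0 := by linarith
  rw [Finset.sum_eq_zero_iff_of_nonneg (fun j _ => abs_nonneg _)] at e1
  rw [Finset.sum_eq_zero_iff_of_nonneg (fun i _ => le_max_left _ _)] at e2
  rw [Finset.sum_eq_zero_iff_of_nonneg (fun i _ => psi_nonneg _ _)] at e3
  refine ⟨fun i => ?_, fun j => abs_eq_zero.1 (e1 j (Finset.mem_univ j)), fun i =>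
    (psi_zero_feas (e3 i (Finset.mem_univ i))).1, fun i =>
    (psi_zero_feas (e3 i (Finset.mem_univ i))).2⟩
  have := e2 i (Finset.mem_univ i)
  by_contra hgi
  push_neg at hgi
  rw [max_eq_right hgi.le] at this
  linarith

lemma feas_of_residR_eq_zero {x : Fin n → ℝ} (hx : residR g h G H x = 0) :
    x ∈ feasSet g h G H := by
  unfold residR at hx
  have p1 : (0:ℝ) ≤ ∑ j, (h j x)^2 := Finset.sum_nonneg fun j _ => by positivity
  have p2 : (0:ℝ) ≤ ∑ i, (max 0 (g i x))^2 := Finset.sum_nonneg fun i _ => by positivity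
  have p3 : (0:ℝ) ≤ ∑ i, min ((max 0 (G i x))^2 + (max 0 (-(H i x)))^2) ((H i x)^2) :=
    Finset.sum_nonneg fun i _ => Dmin_nonneg _ _
  have e1 : ∑ j, (h j x)^2 = 0 := by linarith
  have e2 : ∑ i, (max 0 (g i x))^2 = 0 := by linarith
  have e3 : ∑ i, min ((max 0 (G i x))^2 + (max 0 (-(H i x)))^2) ((H i x)^2) = 0 := by linarith
  rw [Finset.sum_eq_zero_iff_of_nonneg (fun j _ => by positivity)] at e1
  rw [Finset.sum_eq_zero_iff_of_nonneg (fun i _ => by positivity)] at e2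
  rw [Finset.sum_eq_zero_iff_of_nonneg (fun i _ => Dmin_nonneg _ _)] at e3
  refine ⟨fun i => ?_, fun j => ?_, fun i => ?_, fun i => ?_⟩
  · have h0 := e2 i (Finset.mem_univ i)
    by_contra hgi
    push_neg at hgi
    rw [max_eq_right hgi.le] at h0
    nlinarith
  · have := e1 j (Finset.mem_univ j)
    nlinarith [sq_nonneg (h j x)]
  · have := e3 i (Finset.mem_univ i)
    rcases min_eq_iff.1 this with ⟨h0, _⟩ | ⟨h0, _⟩
    · have : max 0 (-(H i x)) = 0 := by nlinarith [sq_nonneg (max 0 (G i x)), sq_nonneg (max 0 (-(H i x)))]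
      nlinarith [le_max_right (0:ℝ) (-(H i x)), this]
    · nlinarith [sq_nonneg (H i x)]
  · have := e3 i (Finset.mem_univ i)
    rcases min_eq_iff.1 this with ⟨h0, _⟩ | ⟨h0, _⟩
    · have hG0 : max 0 (G i x) = 0 := by
        nlinarith [sq_nonneg (max 0 (G i x)), sq_nonneg (max 0 (-(H i x)))]
      have hH0 : 0 ≤ H i x := by
        have : max 0 (-(H i x)) = 0 := by
          nlinarith [sq_nonneg (max 0 (G i x)), sq_nonneg (max 0 (-(H i x)))]
        nlinarith [le_max_right (0:ℝ) (-(H i x))]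
      have hGle : G i x ≤ 0 := by
        by_contra hc; push_neg at hc
        rw [max_eq_right hc.le] at hG0; linarith
      exact mul_nonpos_iff.2 (Or.inr ⟨hGle, hH0⟩)
    · have : H i x = 0 := by nlinarith [sq_nonneg (H i x)]
      simp [this]

lemma l1DistSet_le {x y : Fin n → ℝ} {S : Set (Fin n → ℝ)} (hy : y ∈ S) :
    l1DistSet x S ≤ ∑ i, |x i - y i| :=
  csInf_le ⟨0, by rintro z ⟨w, _, rfl⟩; positivity⟩ ⟨y, hy, rfl⟩

set_option maxHeartbeats 2000000 in
lemma key_step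
    (hg : ∀ i, ContDiff ℝ 1 (g i)) (hh : ∀ j, ContDiff ℝ 1 (h j))
    (hG : ∀ i, ContDiff ℝ 1 (G i)) (hH : ∀ i, ContDiff ℝ 1 (H i))
    (x0 : Fin n → ℝ) (hρ : 0 < resid g h G H x0)
    (hd : 2 * resid g h G H x0 < l1DistSet x0 (feasSet g h G H)) :
    ∃ (y : Fin n → ℝ) (lam : Fin m → ℝ) (mu : Fin l → ℝ) (eG eH : Fin q → ℝ),
      (∑ t, |y t - x0 t|) ≤ l1DistSet x0 (feasSet g h G H) / 2 ∧
      ((∑ i, (lam i)^2) + (∑ j, (mu j)^2) + (∑ i, (eG i)^2) + (∑ i, (eH i)^2) = 1) ∧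
      (∀ t, |(((∑ i, lam i • fderiv ℝ (g i) y) + (∑ j, mu j • fderiv ℝ (h j) y)
          + (∑ i, eG i • fderiv ℝ (G i) y) - (∑ i, eH i • fderiv ℝ (H i) y)) :
          (Fin n → ℝ) →L[ℝ] ℝ)
          (Pi.single t 1)| ≤ 2 * resid g h G H x0 / l1DistSet x0 (feasSet g h G H)) ∧
      (∀ i, 0 ≤ lam i) ∧ (∀ i, lam i ≠ 0 → 0 < g i y) ∧
      (∀ j, mu j ≠ 0 → 0 < mu j * h j y) ∧
      (∀ i, 0 ≤ eG i) ∧ (∀ i, eG i ≠ 0 → 0 < G i y) ∧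
      (∀ i, eG i ≠ 0 → (max 0 (G i y))^2 + (max 0 (-(H i y)))^2 ≤ (H i y)^2) ∧
      (∀ i, eH i ≠ 0 → eH i * H i y < 0) ∧
      (∀ i, eH i < 0 → (0 < H i y ∧ (H i y)^2 ≤ (max 0 (G i y))^2)) ∧
      (∀ i, eH i * eG i = 0) ∧
      (∀ i, eH i ≠ 0 → (H i y < 0 ∨ (H i y)^2 ≤ (max 0 (G i y))^2 + (max 0 (-(H i y)))^2)) := by
  classical
  set C := feasSet g h G H with hC
  set d := l1DistSet x0 C with hddef
  have hρ' := hρ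
  have hdpos : 0 < d := lt_trans (by linarith) hd
  set σ := 2 * resid g h G H x0 / d with hσdef
  have hσpos : 0 < σ := div_pos (by linarith) hdpos
  -- the ℓ¹ ball
  set S : (Fin n → ℝ) → ℝ := fun y => ∑ t, |y t - x0 t| with hSdef
  have hScont : Continuous S := by
    apply continuous_finset_sum
    intro t _
    exact ((continuous_apply t).sub continuous_const).abs
  set K : Set (Fin n → ℝ) := {y | S y ≤ d} with hK
  have hKclosed : IsClosed K := isClosed_le hScont continuous_const
  have hKsub : K ⊆ Metric.closedBall x0 d := by
    intro y hy
    rw [Metric.mem_closedBall]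
    rw [dist_pi_le_iff hdpos.le]
    intro t
    rw [Real.dist_eq]
    exact le_trans (Finset.single_le_sum (f := fun t => |y t - x0 t|)
      (fun t _ => abs_nonneg _) (Finset.mem_univ t)) hy
  have hKcompact : IsCompact K :=
    Metric.isCompact_of_isClosed_isBounded hKclosed
      (Metric.isBounded_closedBall.subset hKsub)
  have hx0K : x0 ∈ K := by simp [hK, hSdef, hdpos.le]
  -- continuity of residR
  have hRcont : Continuous (residR g h G H) := by
    unfold residR
    apply Continuous.add
    apply Continuous.add
    · exact continuous_finset_sum _ (fun j _ => ((hh j).continuous).pow 2)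
    · exact continuous_finset_sum _ (fun i _ =>
        ((continuous_const.max (hg i).continuous).pow 2))
    · exact continuous_finset_sum _ (fun i _ =>
        (((continuous_const.max (hG i).continuous).pow 2).add
          ((continuous_const.max (hH i).continuous.neg).pow 2)).min
          (((hH i).continuous).pow 2))
  set φ : (Fin n → ℝ) → ℝ := fun y => Real.sqrt (residR g h G H y) + σ * S y with hφdef
  have hφcont : Continuous φ :=
    (Real.continuous_sqrt.comp hRcont).add (continuous_const.mul hScont)
  obtain ⟨y, hyK, hymin⟩ := hKcompact.exists_isMinOn ⟨x0, hx0K⟩ hφcont.continuousOn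
  -- value bound
  have hφx0 : φ x0 ≤ resid g h G H x0 := by
    have : S x0 = 0 := by simp [hSdef]
    rw [hφdef]
    simp only [this, mul_zero, add_zero]
    calc Real.sqrt (residR g h G H x0) ≤ Real.sqrt ((resid g h G H x0)^2) :=
          Real.sqrt_le_sqrt (residR_le_sq g h G H x0)
      _ = resid g h G H x0 := Real.sqrt_sq hρ.le
  have hφy : φ y ≤ resid g h G H x0 := le_trans (hymin hx0K) hφx0
  have hmove : S y ≤ d / 2 := by
    have h1 : σ * S y ≤ resid g h G H x0 := by
      have : 0 ≤ Real.sqrt (residR g h G H y) := Real.sqrt_nonneg _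
      rw [hφdef] at hφy; simp only at hφy; linarith
    have h2 : S y ≤ resid g h G H x0 / σ := by
      rw [le_div_iff₀ hσpos]; linarith [h1]
    have h3 : resid g h G H x0 / σ = d / 2 := by
      rw [hσdef]; field_simp
    linarith [h2, h3 ▸ h2]
  -- y is infeasible
  have hRypos : 0 < residR g h G H y := by
    rcases (residR_nonneg g h G H y).lt_or_eq with h' | h'
    · exact h'
    · exfalso
      have hyC : y ∈ C := feas_of_residR_eq_zero g h G H h'.symm
      have : d ≤ ∑ t, |x0 t - y t| := l1DistSet_le hyC
      have he : (∑ t, |x0 t - y t|) = S y := by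
        apply Finset.sum_congr rfl; intro t _; rw [abs_sub_comm]
      rw [he] at this
      linarith
  have hsqpos : 0 < Real.sqrt (residR g h G H y) := Real.sqrt_pos.2 hRypos
  set sq := Real.sqrt (residR g h G H y) with hsqdef
  -- branch selection
  set cond : Fin q → Prop :=
    fun i => (max 0 (G i y))^2 + (max 0 (-(H i y)))^2 ≤ (H i y)^2 with hconddef
  set Rs : (Fin n → ℝ) → ℝ := fun x => (∑ j, (h j x)^2) + (∑ i, (max 0 (g i x))^2) +
      ∑ i, (if cond i then (max 0 (G i x))^2 + (max 0 (-(H i x)))^2 else (H i x)^2) with hRsdef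
  have hbr : ∀ i, (if cond i then (max 0 (G i y))^2 + (max 0 (-(H i y)))^2 else (H i y)^2)
      = min ((max 0 (G i y))^2 + (max 0 (-(H i y)))^2) ((H i y)^2) := by
    intro i
    by_cases hc : cond i
    · rw [if_pos hc, min_eq_left hc]
    · rw [if_neg hc, min_eq_right (le_of_not_ge hc)]
  have hRsy : Rs y = residR g h G H y := by
    simp only [hRsdef, residR, hbr]
  have hRsge : ∀ x, residR g h G H x ≤ Rs x := by
    intro x
    simp only [hRsdef, residR]
    have : ∀ i : Fin q, min ((max 0 (G i x))^2 + (max 0 (-(H i x)))^2) ((H i x)^2)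
        ≤ (if cond i then (max 0 (G i x))^2 + (max 0 (-(H i x)))^2 else (H i x)^2) := by
      intro i
      by_cases hc : cond i
      · rw [if_pos hc]; exact min_le_left _ _
      · rw [if_neg hc]; exact min_le_right _ _
    have hs := Finset.sum_le_sum (fun i (_ : i ∈ Finset.univ) => this i)
    linarith [hs]
  -- differentiability data
  have hDg : ∀ i, HasFDerivAt (g i) (fderiv ℝ (g i) y) y :=
    fun i => (((hg i).differentiable one_ne_zero) y).hasFDerivAt
  have hDh : ∀ j, HasFDerivAt (h j) (fderiv ℝ (h j) y) y :=
    fun j => (((hh j).differentiable one_ne_zero) y).hasFDerivAt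
  have hDG : ∀ i, HasFDerivAt (G i) (fderiv ℝ (G i) y) y :=
    fun i => (((hG i).differentiable one_ne_zero) y).hasFDerivAt
  have hDH : ∀ i, HasFDerivAt (H i) (fderiv ℝ (H i) y) y :=
    fun i => (((hH i).differentiable one_ne_zero) y).hasFDerivAt
  set Dsum : (Fin n → ℝ) →L[ℝ] ℝ :=
    (∑ j, (2 * h j y) • fderiv ℝ (h j) y) + (∑ i, (2 * max 0 (g i y)) • fderiv ℝ (g i) y) +
      ∑ i, (if cond i then
        ((2 * max 0 (G i y)) • fderiv ℝ (G i) y + (-(2 * max 0 (-(H i y)))) • fderiv ℝ (H i) y)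
        else (2 * H i y) • fderiv ℝ (H i) y) with hDsumdef
  have hRsderiv : HasFDerivAt Rs Dsum y := by
    rw [hRsdef, hDsumdef]
    apply HasFDerivAt.add
    apply HasFDerivAt.add
    · apply HasFDerivAt.fun_sum
      intro j _
      have := (hasDerivAt_pow 2 (h j y)).comp_hasFDerivAt y (hDh j)
      simpa [pow_one, Function.comp_def] using this
    · apply HasFDerivAt.fun_sum
      intro i _
      exact (maxsq_hasDerivAt (g i y)).comp_hasFDerivAt y (hDg i)
    · apply HasFDerivAt.fun_sum
      intro i _
      by_cases hc : cond i
      · simp only [if_pos hc]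
        apply HasFDerivAt.add
        · exact (maxsq_hasDerivAt (G i y)).comp_hasFDerivAt y (hDG i)
        · exact (negmaxsq_hasDerivAt (H i y)).comp_hasFDerivAt y (hDH i)
      · simp only [if_neg hc]
        have := (hasDerivAt_pow 2 (H i y)).comp_hasFDerivAt y (hDH i)
        simpa [pow_one, Function.comp_def] using this
  set L : (Fin n → ℝ) →L[ℝ] ℝ := (1 / (2 * sq)) • Dsum with hLdef
  have hFderiv : HasFDerivAt (fun x => Real.sqrt (Rs x)) L y := by
    have h1 : HasDerivAt Real.sqrt (1 / (2 * Real.sqrt (Rs y))) (Rs y) := by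
      apply Real.hasDerivAt_sqrt
      rw [hRsy]; exact ne_of_gt hRypos
    have h2 := h1.comp_hasFDerivAt y hRsderiv
    rw [hLdef]
    rw [hRsy] at h2
    exact h2
  -- local minimality of the smooth majorant
  set U : Set (Fin n → ℝ) := {y' | S y' < d} with hU
  have hUopen : IsOpen U := isOpen_lt hScont continuous_const
  have hyU : y ∈ U := by
    simp only [hU, Set.mem_setOf_eq]
    linarith
  have hminF : ∀ y' ∈ U, Real.sqrt (Rs y) + σ * S y ≤ Real.sqrt (Rs y') + σ * S y' := by
    intro y' hy'
    have hy'K : y' ∈ K := by simp only [hK, Set.mem_setOf_eq]; exact le_of_lt hy'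
    have h1 : φ y ≤ φ y' := hymin hy'K
    have h2 : Real.sqrt (residR g h G H y') ≤ Real.sqrt (Rs y') :=
      Real.sqrt_le_sqrt (hRsge y')
    rw [hφdef] at h1
    simp only at h1
    rw [hRsy]
    linarith
  -- coordinatewise derivative bound
  have hcoord : ∀ t : Fin n, |L (Pi.single t 1)| ≤ σ := by
    intro t
    set e : Fin n → ℝ := Pi.single t 1 with hedef
    have hcurve : HasDerivAt (fun τ : ℝ => y + τ • e) e 0 := by
      simpa using ((hasDerivAt_id (0:ℝ)).smul_const e).const_add y
    have hpt : y + (0:ℝ) • e = y := by simp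
    have hF0 : HasFDerivAt (fun x => Real.sqrt (Rs x)) L (y + (0:ℝ) • e) := by
      rw [hpt]; exact hFderiv
    have hf : HasDerivAt (fun τ : ℝ => Real.sqrt (Rs (y + τ • e)))
        (L e) 0 := by have := hF0.comp_hasDerivAt (0:ℝ) hcurve; exact this
    apply abs_deriv_le hf
    have hcurvecont : Continuous (fun τ : ℝ => y + τ • e) :=
      continuous_const.add (continuous_id.smul continuous_const)
    have hnbhd : ∀ᶠ τ in 𝓝 (0:ℝ), y + τ • e ∈ U := by
      have hca : ContinuousAt (fun τ : ℝ => y + τ • e) 0 := hcurvecont.continuousAt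
      have hm : U ∈ 𝓝 (y + (0:ℝ) • e) := by
        rw [hpt]; exact hUopen.mem_nhds hyU
      exact hca hm
    filter_upwards [hnbhd] with τ hτU
    have hterm : ∀ t', |(y + τ • e) t' - x0 t'|
        ≤ |y t' - x0 t'| + (if t' = t then |τ| else 0) := by
      intro t'
      by_cases ht' : t' = t
      · subst ht'
        simp only [hedef, Pi.add_apply, Pi.smul_apply, Pi.single_eq_same, smul_eq_mul,
          mul_one, if_pos rfl]
        calc |y t' + τ - x0 t'| = |(y t' - x0 t') + τ| := by ring_nf
          _ ≤ |y t' - x0 t'| + |τ| := abs_add_le _ _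
      · simp [hedef, Pi.single_eq_of_ne ht', ht']
    have hSle : S (y + τ • e) ≤ S y + |τ| := by
      calc S (y + τ • e) ≤ ∑ t', (|y t' - x0 t'| + (if t' = t then |τ| else 0)) :=
            Finset.sum_le_sum (fun t' _ => hterm t')
        _ = S y + |τ| := by
            rw [Finset.sum_add_distrib, Finset.sum_ite_eq' Finset.univ t (fun _ => |τ|)]
            simp [hSdef]
    have hmin' := hminF _ hτU
    show Real.sqrt (Rs (y + (0:ℝ) • e)) - σ * |τ| ≤ Real.sqrt (Rs (y + τ • e))
    rw [hpt]
    nlinarith [hσpos.le, abs_nonneg τ, hmin', hSle]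
  -- multipliers
  set lam : Fin m → ℝ := fun i => max 0 (g i y) / sq with hlamdef
  set mu : Fin l → ℝ := fun j => h j y / sq with hmudef
  set eG : Fin q → ℝ := fun i => if cond i then max 0 (G i y) / sq else 0 with heGdef
  set eH : Fin q → ℝ := fun i => if cond i then max 0 (-(H i y)) / sq else -(H i y) / sq
    with heHdef
  have hsq2 : sq^2 = residR g h G H y := Real.sq_sqrt hRypos.le
  have hsqne : sq ≠ 0 := ne_of_gt hsqpos
  refine ⟨y, lam, mu, eG, eH, hmove, ?_, ?_, ?_, ?_, ?_, ?_, ?_, ?_, ?_, ?_, ?_, ?_⟩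
  · -- unit norm
    have hA : (∑ i, lam i ^ 2) = (∑ i, (max 0 (g i y))^2) / sq^2 := by
      rw [Finset.sum_div]
      exact Finset.sum_congr rfl (fun i _ => by simp only [hlamdef]; rw [div_pow])
    have hB : (∑ j, mu j ^ 2) = (∑ j, (h j y)^2) / sq^2 := by
      rw [Finset.sum_div]
      exact Finset.sum_congr rfl (fun j _ => by simp only [hmudef]; rw [div_pow])
    have hGH : (∑ i, eG i ^ 2) + (∑ i, eH i ^ 2) =
        (∑ i, (if cond i then (max 0 (G i y))^2 + (max 0 (-(H i y)))^2 else (H i y)^2)) / sq^2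
        := by
      rw [← Finset.sum_add_distrib, Finset.sum_div]
      apply Finset.sum_congr rfl
      intro i _
      by_cases hc : cond i
      · simp only [heGdef, heHdef, if_pos hc]
        rw [div_pow, div_pow, ← add_div]
      · simp only [heGdef, heHdef, if_neg hc]
        rw [div_pow, neg_sq]
        norm_num
    have hnum : (∑ j, (h j y)^2) + (∑ i, (max 0 (g i y))^2) +
        (∑ i, (if cond i then (max 0 (G i y))^2 + (max 0 (-(H i y)))^2 else (H i y)^2))
        = residR g h G H y := hRsy
    rw [hA, hB]
    have : (∑ i, eG i ^ 2) + (∑ i, eH i ^ 2) =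
        (∑ i, (if cond i then (max 0 (G i y))^2 + (max 0 (-(H i y)))^2 else (H i y)^2)) / sq^2
        := hGH
    have hfin : (∑ i, (max 0 (g i y))^2) / sq^2 + (∑ j, (h j y)^2) / sq^2 +
        ((∑ i, eG i ^ 2) + (∑ i, eH i ^ 2)) = residR g h G H y / sq^2 := by
      rw [this, ← add_div, ← add_div, ← hnum]
      ring_nf
    have hone : residR g h G H y / sq^2 = 1 := by
      rw [hsq2]; exact div_self (ne_of_gt hRypos)
    linarith [hfin, hone]
  · -- gradient bound
    intro t
    have happ : (((∑ i, lam i • fderiv ℝ (g i) y) + (∑ j, mu j • fderiv ℝ (h j) y)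
          + (∑ i, eG i • fderiv ℝ (G i) y) - (∑ i, eH i • fderiv ℝ (H i) y)) :
          (Fin n → ℝ) →L[ℝ] ℝ) (Pi.single t 1) = L (Pi.single t 1) := by
      simp only [hLdef, hDsumdef, ContinuousLinearMap.add_apply, ContinuousLinearMap.sub_apply,
        ContinuousLinearMap.coe_sum', Finset.sum_apply, ContinuousLinearMap.coe_smul',
        Pi.smul_apply, smul_eq_mul, ContinuousLinearMap.smul_apply,
        apply_ite (fun (f : (Fin n → ℝ) →L[ℝ] ℝ) => f (Pi.single t 1))]
      have E1 : (∑ i, lam i * (fderiv ℝ (g i) y (Pi.single t 1))) =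
          1/(2*sq) * ∑ i, 2 * max 0 (g i y) * (fderiv ℝ (g i) y (Pi.single t 1)) := by
        rw [Finset.mul_sum]
        exact Finset.sum_congr rfl (fun i _ => by simp only [hlamdef]; field_simp)
      have E2 : (∑ j, mu j * (fderiv ℝ (h j) y (Pi.single t 1))) =
          1/(2*sq) * ∑ j, 2 * h j y * (fderiv ℝ (h j) y (Pi.single t 1)) := by
        rw [Finset.mul_sum]
        exact Finset.sum_congr rfl (fun j _ => by simp only [hmudef]; field_simp)
      have E3 : (∑ i, eG i * (fderiv ℝ (G i) y (Pi.single t 1)))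
          - (∑ i, eH i * (fderiv ℝ (H i) y (Pi.single t 1))) =
          1/(2*sq) * ∑ i, (if cond i then
            2 * max 0 (G i y) * (fderiv ℝ (G i) y (Pi.single t 1)) +
              (-(2 * max 0 (-(H i y)))) * (fderiv ℝ (H i) y (Pi.single t 1))
            else 2 * H i y * (fderiv ℝ (H i) y (Pi.single t 1))) := by
        rw [← Finset.sum_sub_distrib, Finset.mul_sum]
        apply Finset.sum_congr rfl
        intro i _
        by_cases hc : cond i
        · simp only [heGdef, heHdef, if_pos hc]
          field_simp
          ring
        · simp only [heGdef, heHdef, if_neg hc]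
          field_simp
          ring
      rw [mul_add, mul_add]
      linarith [E1, E2, E3]
    rw [happ]
    exact hcoord t
  · -- lam nonneg
    intro i
    simp only [hlamdef]
    exact div_nonneg (le_max_left _ _) hsqpos.le
  · -- lam ≠ 0 → g > 0
    intro i hne
    simp only [hlamdef] at hne
    by_contra hgle
    push_neg at hgle
    rw [max_eq_left hgle] at hne
    simp at hne
  · -- mu ≠ 0 → mu * h > 0
    intro j hne
    simp only [hmudef] at hne ⊢
    have hhne : h j y ≠ 0 := fun hz => hne (by rw [hz]; simp)
    have : h j y / sq * h j y = (h j y)^2 / sq := by ring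
    rw [this]
    exact div_pos (by positivity) hsqpos
  · -- eG nonneg
    intro i
    simp only [heGdef]
    by_cases hc : cond i
    · rw [if_pos hc]; exact div_nonneg (le_max_left _ _) hsqpos.le
    · rw [if_neg hc]
  · -- eG ≠ 0 → G > 0
    intro i hne
    simp only [heGdef] at hne
    by_cases hc : cond i
    · rw [if_pos hc] at hne
      by_contra hGle
      push_neg at hGle
      rw [max_eq_left hGle] at hne
      simp at hne
    · rw [if_neg hc] at hne
      simp at hne
  · -- eG ≠ 0 → cond
    intro i hne
    simp only [heGdef] at hne
    by_cases hc : cond i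
    · have := hc
      simp only [hconddef] at this
      exact this
    · rw [if_neg hc] at hne
      simp at hne
  · -- eH ≠ 0 → eH * H < 0
    intro i hne
    simp only [heHdef] at hne ⊢
    by_cases hc : cond i
    · rw [if_pos hc] at hne ⊢
      have hmax : max 0 (-(H i y)) ≠ 0 := fun hz => hne (by rw [hz]; simp)
      have hHneg : H i y < 0 := by
        by_contra hge
        push_neg at hge
        rw [max_eq_left (by linarith)] at hmax
        simp at hmax
      have hpos : 0 < max 0 (-(H i y)) / sq :=
        div_pos (lt_max_of_lt_right (by linarith)) hsqpos
      exact mul_neg_of_pos_of_neg hpos hHneg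
    · rw [if_neg hc] at hne ⊢
      have hHne : H i y ≠ 0 := fun hz => hne (by rw [hz]; simp)
      have : -(H i y) / sq * H i y = -((H i y)^2 / sq) := by ring
      rw [this]
      have : 0 < (H i y)^2 / sq := div_pos (by positivity) hsqpos
      linarith
  · -- eH < 0 → H > 0 ∧ H² ≤ max0G²
    intro i hneg
    simp only [heHdef] at hneg
    by_cases hc : cond i
    · rw [if_pos hc] at hneg
      exfalso
      have : 0 ≤ max 0 (-(H i y)) / sq := div_nonneg (le_max_left _ _) hsqpos.le
      linarith
    · rw [if_neg hc] at hneg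
      have hcond' := hc
      simp only [hconddef] at hcond'
      push_neg at hcond'
      have hHpos : 0 < H i y := by
        by_contra hge
        push_neg at hge
        have : 0 ≤ -(H i y) / sq := div_nonneg (by linarith) hsqpos.le
        linarith
      have hmax0 : max 0 (-(H i y)) = 0 := max_eq_left (by linarith)
      rw [hmax0] at hcond'
      constructor
      · exact hHpos
      · nlinarith [hcond']
  · -- eH * eG = 0
    intro i
    simp only [heHdef, heGdef]
    by_cases hc : cond i
    · rw [if_pos hc, if_pos hc]
      have hcond' := hc
      simp only [hconddef] at hcond'
      rcases le_or_gt (H i y) 0 with hH | hH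
      · have hGmax : max 0 (G i y) = 0 := by
          have h1 : (max 0 (-(H i y)))^2 = (H i y)^2 := by
            rw [max_eq_right (by linarith)]; ring
          nlinarith [le_max_left (0:ℝ) (G i y), sq_nonneg (max 0 (G i y))]
        rw [hGmax]
        simp
      · have hHmax : max 0 (-(H i y)) = 0 := max_eq_left (by linarith)
        rw [hHmax]
        simp
    · rw [if_neg hc, if_neg hc]
      simp
  · -- eH ≠ 0 → H < 0 ∨ H² ≤ p1
    intro i hne
    simp only [heHdef] at hne
    by_cases hc : cond i
    · left
      rw [if_pos hc] at hne
      have hmax : max 0 (-(H i y)) ≠ 0 := fun hz => hne (by rw [hz]; simp)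
      by_contra hge
      push_neg at hge
      rw [max_eq_left (by linarith)] at hmax
      simp at hmax
    · right
      have hcond' := hc
      simp only [hconddef] at hcond'
      push_neg at hcond'
      linarith [hcond']

end MPVCaux

open MPVCaux

set_option maxHeartbeats 2000000

/-- MPVC-generalized quasinormality at a feasible point `xs` implies a
local error bound in the ℓ¹-norm: there are `δ, c > 0` with
`dist₁(x, C) ≤ c (Σ|h_j(x)| + Σ max{0,g_i(x)} + Σ dist₁((G_i(x),H_i(x)), Ω))`
for all `x` with `‖x - xs‖₁ < δ/2`. -/
theorem local_error_bound_of_genQuasinormal {n m l q : ℕ}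
    (g : Fin m → (Fin n → ℝ) → ℝ) (h : Fin l → (Fin n → ℝ) → ℝ)
    (G H : Fin q → (Fin n → ℝ) → ℝ)
    (hg : ∀ i, ContDiff ℝ 1 (g i)) (hh : ∀ j, ContDiff ℝ 1 (h j))
    (hG : ∀ i, ContDiff ℝ 1 (G i)) (hH : ∀ i, ContDiff ℝ 1 (H i))
    (xs : Fin n → ℝ) (hxs : xs ∈ feasSet g h G H)
    (hquasi : GenQuasinormal g h G H xs) :
    ∃ δ c : ℝ, 0 < δ ∧ 0 < c ∧
      ∀ x : Fin n → ℝ, (∑ i, |x i - xs i|) < δ / 2 →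
        l1DistSet x (feasSet g h G H) ≤
          c * ((∑ j, |h j x|) + (∑ i, max 0 (g i x)) + ∑ i, l1DistOmega (G i x, H i x)) := by
  classical
  by_contra hcon
  push_neg at hcon
  have hres_eq : ∀ x : Fin n → ℝ,
      ((∑ j, |h j x|) + (∑ i, max 0 (g i x)) + ∑ i, l1DistOmega (G i x, H i x))
      = resid g h G H x := by
    intro x
    unfold resid
    congr 1
    exact Finset.sum_congr rfl (fun i _ => l1DistOmega_eq _ _)
  -- extract offending sequence
  have hseq : ∀ k : ℕ, ∃ x : Fin n → ℝ, (∑ t, |x t - xs t|) < (1/(k+1))/2 ∧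
      ((k:ℝ)+2) * resid g h G H x < l1DistSet x (feasSet g h G H) := by
    intro k
    obtain ⟨x, hx1, hx2⟩ := hcon (1/(k+1)) ((k:ℝ)+2) (by positivity) (by positivity)
    exact ⟨x, hx1, by rw [← hres_eq]; exact hx2⟩
  choose x hx1 hx2 using hseq
  -- positivity of the residual
  have hρpos : ∀ k, 0 < resid g h G H (x k) := by
    intro k
    rcases (resid_nonneg g h G H (x k)).lt_or_eq with h' | h'
    · exact h'
    · exfalso
      have hfeas : x k ∈ feasSet g h G H := feas_of_resid_eq_zero g h G H h'.symm
      have h1 : l1DistSet (x k) (feasSet g h G H) ≤ 0 := by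
        have := l1DistSet_le (x := x k) hfeas
        simpa using this
      have := hx2 k
      rw [← h'] at this
      simp at this
      linarith
  have hdk : ∀ k, 0 < l1DistSet (x k) (feasSet g h G H) := by
    intro k
    calc (0:ℝ) < ((k:ℝ)+2) * resid g h G H (x k) :=
          mul_pos (by positivity) (hρpos k)
      _ < _ := hx2 k
  have hdle : ∀ k, l1DistSet (x k) (feasSet g h G H) ≤ ∑ t, |x k t - xs t| :=
    fun k => l1DistSet_le hxs
  -- apply the key construction
  choose y lam mu eG eH hmove hnorm hgrad hP1 hP2 hP3 hP4 hP5 hP6 hP7 hP8 hP9 hP10 using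
    fun k : ℕ => key_step g h G H hg hh hG hH (x k) (hρpos k)
      (by nlinarith [hx2 k, hρpos k, (Nat.cast_nonneg k : (0:ℝ) ≤ k)])
  -- σ_k bound
  have hσk : ∀ k : ℕ, 2 * resid g h G H (x k) / l1DistSet (x k) (feasSet g h G H)
      ≤ 2 / ((k:ℝ)+2) := by
    intro k
    rw [div_le_div_iff₀ (hdk k) (by positivity)]
    nlinarith [hx2 k, hρpos k]
  have hσlim : Tendsto (fun k : ℕ => 2 / ((k:ℝ)+2)) atTop (𝓝 0) :=
    Tendsto.div_atTop tendsto_const_nhds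
      (tendsto_atTop_add_const_right _ 2 tendsto_natCast_atTop_atTop)
  -- y converges to xs
  have hyxs : ∀ k, (∑ t, |y k t - xs t|) ≤ (3/4) * (1/((k:ℝ)+1)) := by
    intro k
    have htri : (∑ t, |y k t - xs t|) ≤ (∑ t, |y k t - x k t|) + ∑ t, |x k t - xs t| := by
      rw [← Finset.sum_add_distrib]
      exact Finset.sum_le_sum (fun t _ => abs_sub_le _ _ _)
    have h2 := hmove k
    have h3 := hdle k
    have h4 := (hx1 k).le
    linarith
  have hone : Tendsto (fun k : ℕ => 1/((k:ℝ)+1)) atTop (𝓝 0) :=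
    Tendsto.div_atTop tendsto_const_nhds
      (tendsto_atTop_add_const_right _ 1 tendsto_natCast_atTop_atTop)
  have hyconv : Tendsto (fun k => y k) atTop (𝓝 xs) := by
    rw [tendsto_iff_dist_tendsto_zero]
    have hb : ∀ k, dist (y k) xs ≤ (3/4) * (1/((k:ℝ)+1)) := by
      intro k
      have hsup : dist (y k) xs ≤ ∑ t, |y k t - xs t| := by
        rw [dist_pi_le_iff (Finset.sum_nonneg (fun t _ => abs_nonneg (y k t - xs t)))]
        intro t
        rw [Real.dist_eq]
        exact Finset.single_le_sum (f := fun t => |y k t - xs t|)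
          (fun t _ => abs_nonneg _) (Finset.mem_univ t)
      exact hsup.trans (hyxs k)
    apply squeeze_zero (fun k => dist_nonneg) hb
    have h34 := hone.const_mul (3/4 : ℝ)
    simpa using h34
  -- multiplier tuples are bounded
  have habs1 : ∀ a : ℝ, a^2 ≤ 1 → |a| ≤ 1 := by
    intro a ha
    nlinarith [abs_nonneg a, sq_abs a]
  set v : ℕ → (Fin m → ℝ) × (Fin l → ℝ) × (Fin q → ℝ) × (Fin q → ℝ) :=
    fun k => (lam k, mu k, eG k, eH k) with hvdef
  have hsums : ∀ k, (0 ≤ ∑ i, lam k i ^2) ∧ (0 ≤ ∑ j, mu k j ^2) ∧ (0 ≤ ∑ i, eG k i ^2)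
      ∧ (0 ≤ ∑ i, eH k i ^2) :=
    fun k => ⟨Finset.sum_nonneg fun i _ => sq_nonneg _, Finset.sum_nonneg fun j _ => sq_nonneg _,
      Finset.sum_nonneg fun i _ => sq_nonneg _, Finset.sum_nonneg fun i _ => sq_nonneg _⟩
  have hbound : ∀ k, v k ∈ Metric.closedBall
      (0 : (Fin m → ℝ) × (Fin l → ℝ) × (Fin q → ℝ) × (Fin q → ℝ)) 1 := by
    intro k
    rw [Metric.mem_closedBall, dist_zero_right]
    obtain ⟨s1, s2, s3, s4⟩ := hsums k
    have hnk := hnorm k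
    have hvp : v k = (lam k, mu k, eG k, eH k) := rfl
    rw [hvp, Prod.norm_def, Prod.norm_def, Prod.norm_def]
    dsimp only
    refine max_le ?_ (max_le ?_ (max_le ?_ ?_))
    · rw [pi_norm_le_iff_of_nonneg zero_le_one]
      intro i
      rw [Real.norm_eq_abs]
      refine habs1 _ ?_
      have hle : lam k i ^ 2 ≤ ∑ i', lam k i' ^ 2 :=
        Finset.single_le_sum (f := fun i' => lam k i' ^ 2)
          (fun i' _ => sq_nonneg _) (Finset.mem_univ i)
      linarith
    · rw [pi_norm_le_iff_of_nonneg zero_le_one]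
      intro j
      rw [Real.norm_eq_abs]
      refine habs1 _ ?_
      have hle : mu k j ^ 2 ≤ ∑ j', mu k j' ^ 2 :=
        Finset.single_le_sum (f := fun j' => mu k j' ^ 2)
          (fun j' _ => sq_nonneg _) (Finset.mem_univ j)
      linarith
    · rw [pi_norm_le_iff_of_nonneg zero_le_one]
      intro i
      rw [Real.norm_eq_abs]
      refine habs1 _ ?_
      have hle : eG k i ^ 2 ≤ ∑ i', eG k i' ^ 2 :=
        Finset.single_le_sum (f := fun i' => eG k i' ^ 2)
          (fun i' _ => sq_nonneg _) (Finset.mem_univ i)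
      linarith
    · rw [pi_norm_le_iff_of_nonneg zero_le_one]
      intro i
      rw [Real.norm_eq_abs]
      refine habs1 _ ?_
      have hle : eH k i ^ 2 ≤ ∑ i', eH k i' ^ 2 :=
        Finset.single_le_sum (f := fun i' => eH k i' ^ 2)
          (fun i' _ => sq_nonneg _) (Finset.mem_univ i)
      linarith
  obtain ⟨vbar, _, Φ, hΦmono, hvΦ⟩ :=
    tendsto_subseq_of_bounded Metric.isBounded_closedBall hbound
  set lb : Fin m → ℝ := vbar.1 with hlbdef
  set mb : Fin l → ℝ := vbar.2.1 with hmbdef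
  set Gb : Fin q → ℝ := vbar.2.2.1 with hGbdef
  set Hb : Fin q → ℝ := vbar.2.2.2 with hHbdef
  have hlamlim : ∀ i, Tendsto (fun j => lam (Φ j) i) atTop (𝓝 (lb i)) := by
    intro i
    have h1 : Tendsto (fun j => (v (Φ j)).1) atTop (𝓝 vbar.1) :=
      ((continuous_fst.tendsto vbar).comp hvΦ)
    exact tendsto_pi_nhds.1 h1 i
  have hmulim : ∀ j', Tendsto (fun j => mu (Φ j) j') atTop (𝓝 (mb j')) := by
    intro j'
    have h1 : Tendsto (fun j => (v (Φ j)).2.1) atTop (𝓝 vbar.2.1) :=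
      ((continuous_fst.comp continuous_snd).tendsto vbar).comp hvΦ
    exact tendsto_pi_nhds.1 h1 j'
  have hGblim : ∀ i, Tendsto (fun j => eG (Φ j) i) atTop (𝓝 (Gb i)) := by
    intro i
    have h1 : Tendsto (fun j => (v (Φ j)).2.2.1) atTop (𝓝 vbar.2.2.1) :=
      ((continuous_fst.comp (continuous_snd.comp continuous_snd)).tendsto vbar).comp hvΦ
    exact tendsto_pi_nhds.1 h1 i
  have hHblim : ∀ i, Tendsto (fun j => eH (Φ j) i) atTop (𝓝 (Hb i)) := by
    intro i
    have h1 : Tendsto (fun j => (v (Φ j)).2.2.2) atTop (𝓝 vbar.2.2.2) :=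
      ((continuous_snd.comp (continuous_snd.comp continuous_snd)).tendsto vbar).comp hvΦ
    exact tendsto_pi_nhds.1 h1 i
  -- limit of the unit-norm equation
  have hnormbar : (∑ i, lb i^2) + (∑ j, mb j^2) + (∑ i, Gb i^2) + (∑ i, Hb i^2) = 1 := by
    have hterm : Tendsto (fun j => (∑ i, lam (Φ j) i^2) + (∑ j', mu (Φ j) j'^2)
        + (∑ i, eG (Φ j) i^2) + (∑ i, eH (Φ j) i^2)) atTop
        (𝓝 ((∑ i, lb i^2) + (∑ j, mb j^2) + (∑ i, Gb i^2) + (∑ i, Hb i^2))) := by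
      refine Tendsto.add (Tendsto.add (Tendsto.add ?_ ?_) ?_) ?_
      · exact tendsto_finset_sum _ (fun i _ => (hlamlim i).pow 2)
      · exact tendsto_finset_sum _ (fun j' _ => (hmulim j').pow 2)
      · exact tendsto_finset_sum _ (fun i _ => (hGblim i).pow 2)
      · exact tendsto_finset_sum _ (fun i _ => (hHblim i).pow 2)
    have h2 : Tendsto (fun j => (∑ i, lam (Φ j) i^2) + (∑ j', mu (Φ j) j'^2)
        + (∑ i, eG (Φ j) i^2) + (∑ i, eH (Φ j) i^2)) atTop (𝓝 1) := by
      simp only [hnorm]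
      exact tendsto_const_nhds
    exact tendsto_nhds_unique hterm h2
  have hyconvΦ : Tendsto (fun j => y (Φ j)) atTop (𝓝 xs) :=
    hyconv.comp hΦmono.tendsto_atTop
  -- value convergence along the subsequence
  have hgy : ∀ i, Tendsto (fun j => g i (y (Φ j))) atTop (𝓝 (g i xs)) :=
    fun i => ((hg i).continuous.tendsto xs).comp hyconvΦ
  have hhy : ∀ j', Tendsto (fun j => h j' (y (Φ j))) atTop (𝓝 (h j' xs)) :=
    fun j' => ((hh j').continuous.tendsto xs).comp hyconvΦ
  have hGy : ∀ i, Tendsto (fun j => G i (y (Φ j))) atTop (𝓝 (G i xs)) :=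
    fun i => ((hG i).continuous.tendsto xs).comp hyconvΦ
  have hHy : ∀ i, Tendsto (fun j => H i (y (Φ j))) atTop (𝓝 (H i xs)) :=
    fun i => ((hH i).continuous.tendsto xs).comp hyconvΦ
  have hlimzero : ∀ {u : ℕ → ℝ} {a : ℝ}, Tendsto u atTop (𝓝 a) →
      (∀ᶠ j in atTop, u j = 0) → a = 0 := by
    intro u a h1 h2
    exact tendsto_nhds_unique h1 (tendsto_const_nhds.congr' (h2.mono fun j e => e.symm))
  obtain ⟨hxsg, hxsh, hxsH, hxsGH⟩ := hxs
  -- (ii) conditions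
  have c2 : ∀ i, 0 ≤ lb i :=
    fun i => ge_of_tendsto (hlamlim i) (Eventually.of_forall (fun j => hP1 (Φ j) i))
  have c3 : ∀ i, g i xs ≠ 0 → lb i = 0 := by
    intro i hne
    have hgneg : g i xs < 0 := lt_of_le_of_ne (hxsg i) hne
    have hev : ∀ᶠ j in atTop, lam (Φ j) i = 0 := by
      filter_upwards [(hgy i).eventually_lt_const hgneg] with j hj
      by_contra hne'
      exact absurd (hP2 (Φ j) i hne') (by linarith)
    exact hlimzero (hlamlim i) hev
  have c5 : ∀ i, 0 ≤ Gb i :=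
    fun i => ge_of_tendsto (hGblim i) (Eventually.of_forall (fun j => hP4 (Φ j) i))
  have c4 : ∀ i, (0 < H i xs ∧ G i xs < 0) ∨ (H i xs = 0 ∧ G i xs < 0) ∨
      (H i xs = 0 ∧ 0 < G i xs) → Gb i = 0 := by
    intro i hcase
    rcases hcase with ⟨_, hGneg⟩ | ⟨_, hGneg⟩ | ⟨hH0, hGpos⟩
    · refine hlimzero (hGblim i) ?_
      filter_upwards [(hGy i).eventually_lt_const hGneg] with j hj
      by_contra hne'
      exact absurd (hP5 (Φ j) i hne') (by linarith)
    · refine hlimzero (hGblim i) ?_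
      filter_upwards [(hGy i).eventually_lt_const hGneg] with j hj
      by_contra hne'
      exact absurd (hP5 (Φ j) i hne') (by linarith)
    · refine hlimzero (hGblim i) ?_
      have he1 : ∀ᶠ j in atTop, G i xs / 2 < G i (y (Φ j)) :=
        (hGy i).eventually_const_lt (by linarith)
      have he2 : ∀ᶠ j in atTop, H i (y (Φ j)) < G i xs / 2 := by
        refine (hHy i).eventually_lt_const ?_
        rw [hH0]; linarith
      have he3 : ∀ᶠ j in atTop, -(G i xs / 2) < H i (y (Φ j)) := by
        refine (hHy i).eventually_const_lt ?_
        rw [hH0]; linarith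
      filter_upwards [he1, he2, he3] with j h1 h2 h3
      by_contra hne'
      have hp6 := hP6 (Φ j) i hne'
      have hmax : G i xs / 2 < max 0 (G i (y (Φ j))) := lt_max_of_lt_right h1
      have hHsq : (H i (y (Φ j)))^2 < (G i xs / 2)^2 := sq_lt_sq' (by linarith) h2
      nlinarith [sq_nonneg (max 0 (-(H i (y (Φ j))))), le_max_left (0:ℝ) (G i (y (Φ j)))]
  have c6 : ∀ i, 0 < H i xs → Hb i = 0 := by
    intro i hHpos
    have hGxs : G i xs ≤ 0 := by nlinarith [hxsGH i, hxsH i]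
    refine hlimzero (hHblim i) ?_
    have he1 : ∀ᶠ j in atTop, H i xs / 2 < H i (y (Φ j)) :=
      (hHy i).eventually_const_lt (by linarith)
    have he2 : ∀ᶠ j in atTop, G i (y (Φ j)) < H i xs / 2 :=
      (hGy i).eventually_lt_const (by linarith)
    filter_upwards [he1, he2] with j h1 h2
    by_contra hne'
    rcases hP10 (Φ j) i hne' with hneg | hsq
    · linarith
    · have hmaxH : max 0 (-(H i (y (Φ j)))) = 0 := max_eq_left (by linarith)
      have hmaxG : max 0 (G i (y (Φ j))) < H i xs / 2 :=
        max_lt (by linarith) h2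
      rw [hmaxH] at hsq
      nlinarith [le_max_left (0:ℝ) (G i (y (Φ j)))]
  have c7 : ∀ i, H i xs = 0 ∧ G i xs < 0 → 0 ≤ Hb i := by
    intro i ⟨hH0, hGneg⟩
    refine ge_of_tendsto (hHblim i) ?_
    filter_upwards [(hGy i).eventually_lt_const hGneg] with j hj
    by_contra hlt
    push_neg at hlt
    obtain ⟨hHpos, hsq⟩ := hP8 (Φ j) i hlt
    have hmaxG : max 0 (G i (y (Φ j))) = 0 := max_eq_left hj.le
    rw [hmaxG] at hsq
    nlinarith
  have c8 : ∀ i, H i xs = 0 ∧ G i xs = 0 → Hb i * Gb i = 0 := by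
    intro i _
    have h1 : Tendsto (fun j => eH (Φ j) i * eG (Φ j) i) atTop (𝓝 (Hb i * Gb i)) :=
      (hHblim i).mul (hGblim i)
    refine hlimzero h1 (Eventually.of_forall (fun j => hP9 (Φ j) i))
  -- nonzero
  have hnontriv : lb ≠ 0 ∨ mb ≠ 0 ∨ Gb ≠ 0 ∨ Hb ≠ 0 := by
    by_contra hz
    push_neg at hz
    obtain ⟨h1, h2, h3, h4⟩ := hz
    rw [h1, h2, h3, h4] at hnormbar
    simp at hnormbar
  -- applied-form expansion helper
  have happly : ∀ (z : Fin n → ℝ) (la : Fin m → ℝ) (mu' : Fin l → ℝ) (eg eh : Fin q → ℝ)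
      (w : Fin n → ℝ),
      (((∑ i, la i • fderiv ℝ (g i) z) + (∑ j, mu' j • fderiv ℝ (h j) z)
        + (∑ i, eg i • fderiv ℝ (G i) z) - (∑ i, eh i • fderiv ℝ (H i) z)) :
        (Fin n → ℝ) →L[ℝ] ℝ) w
      = (∑ i, la i * fderiv ℝ (g i) z w) + (∑ j, mu' j * fderiv ℝ (h j) z w)
        + (∑ i, eg i * fderiv ℝ (G i) z w) - (∑ i, eh i * fderiv ℝ (H i) z w) := by
    intro z la mu' eg eh w
    simp [ContinuousLinearMap.add_apply, ContinuousLinearMap.sub_apply,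
      ContinuousLinearMap.coe_sum', Finset.sum_apply, ContinuousLinearMap.coe_smul',
      Pi.smul_apply, smul_eq_mul]
  -- convergence of derivative values
  have hDgl : ∀ i (w : Fin n → ℝ), Tendsto (fun j => fderiv ℝ (g i) (y (Φ j)) w) atTop
      (𝓝 (fderiv ℝ (g i) xs w)) := fun i w =>
    (((((hg i).continuous_fderiv one_ne_zero).clm_apply continuous_const).tendsto xs)).comp hyconvΦ
  have hDhl : ∀ j' (w : Fin n → ℝ), Tendsto (fun j => fderiv ℝ (h j') (y (Φ j)) w) atTop
      (𝓝 (fderiv ℝ (h j') xs w)) := fun j' w =>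
    (((((hh j').continuous_fderiv one_ne_zero).clm_apply continuous_const).tendsto xs)).comp hyconvΦ
  have hDGl : ∀ i (w : Fin n → ℝ), Tendsto (fun j => fderiv ℝ (G i) (y (Φ j)) w) atTop
      (𝓝 (fderiv ℝ (G i) xs w)) := fun i w =>
    (((((hG i).continuous_fderiv one_ne_zero).clm_apply continuous_const).tendsto xs)).comp hyconvΦ
  have hDHl : ∀ i (w : Fin n → ℝ), Tendsto (fun j => fderiv ℝ (H i) (y (Φ j)) w) atTop
      (𝓝 (fderiv ℝ (H i) xs w)) := fun i w =>
    (((((hH i).continuous_fderiv one_ne_zero).clm_apply continuous_const).tendsto xs)).comp hyconvΦ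
  -- the limit gradient equation
  have hT : ∀ t : Fin n, (((∑ i, lb i • fderiv ℝ (g i) xs) + (∑ j, mb j • fderiv ℝ (h j) xs)
      + (∑ i, Gb i • fderiv ℝ (G i) xs) - (∑ i, Hb i • fderiv ℝ (H i) xs)) :
      (Fin n → ℝ) →L[ℝ] ℝ) (Pi.single t 1) = 0 := by
    intro t
    set A : ℕ → ℝ := fun j => (∑ i, lam (Φ j) i * fderiv ℝ (g i) (y (Φ j)) (Pi.single t 1))
      + (∑ j', mu (Φ j) j' * fderiv ℝ (h j') (y (Φ j)) (Pi.single t 1))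
      + (∑ i, eG (Φ j) i * fderiv ℝ (G i) (y (Φ j)) (Pi.single t 1))
      - (∑ i, eH (Φ j) i * fderiv ℝ (H i) (y (Φ j)) (Pi.single t 1)) with hAdef
    have hA1 : Tendsto A atTop (𝓝 ((∑ i, lb i * fderiv ℝ (g i) xs (Pi.single t 1))
        + (∑ j', mb j' * fderiv ℝ (h j') xs (Pi.single t 1))
        + (∑ i, Gb i * fderiv ℝ (G i) xs (Pi.single t 1))
        - (∑ i, Hb i * fderiv ℝ (H i) xs (Pi.single t 1)))) := by
      refine Tendsto.sub (Tendsto.add (Tendsto.add ?_ ?_) ?_) ?_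
      · exact tendsto_finset_sum _ (fun i _ => (hlamlim i).mul (hDgl i _))
      · exact tendsto_finset_sum _ (fun j' _ => (hmulim j').mul (hDhl j' _))
      · exact tendsto_finset_sum _ (fun i _ => (hGblim i).mul (hDGl i _))
      · exact tendsto_finset_sum _ (fun i _ => (hHblim i).mul (hDHl i _))
    have hA0 : Tendsto A atTop (𝓝 0) := by
      apply squeeze_zero_norm (fun j => ?_) hσlim
      have hg1 := hgrad (Φ j) t
      rw [happly] at hg1
      have h2 := hσk (Φ j)
      have h3 : (2:ℝ)/((Φ j:ℝ)+2) ≤ 2/((j:ℝ)+2) := by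
        gcongr
        exact_mod_cast hΦmono.le_apply
      rw [Real.norm_eq_abs, hAdef]
      exact le_trans (le_trans hg1 h2) h3
    have heq := tendsto_nhds_unique hA1 hA0
    rw [happly]
    exact heq
  have c1 : ((∑ i, lb i • fderiv ℝ (g i) xs) + (∑ j, mb j • fderiv ℝ (h j) xs)
      + (∑ i, Gb i • fderiv ℝ (G i) xs) - (∑ i, Hb i • fderiv ℝ (H i) xs)) = 0 := by
    have hrepr : ∀ (f : (Fin n → ℝ) →L[ℝ] ℝ) (w : Fin n → ℝ),
        f w = ∑ t, w t * f (Pi.single t 1) := by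
      intro f w
      have hv : (∑ t, w t • (Pi.single t 1 : Fin n → ℝ)) = w := by
        funext j'
        rw [Finset.sum_apply]
        simp only [Pi.smul_apply, smul_eq_mul, Pi.single_apply, mul_ite, mul_one, mul_zero]
        rw [Finset.sum_ite_eq]
        simp
      conv_lhs => rw [← hv]
      rw [map_sum]
      exact Finset.sum_congr rfl (fun t _ => by rw [map_smul, smul_eq_mul])
    apply ContinuousLinearMap.ext
    intro w
    rw [ContinuousLinearMap.zero_apply, hrepr]
    simp only [hT, mul_zero, Finset.sum_const_zero]
  -- the witness sequence conditions, eventually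
  have hevA : ∀ᶠ j in atTop, ∀ i, 0 < lb i → 0 < lb i * g i (y (Φ j)) := by
    rw [eventually_all]
    intro i
    by_cases hpos : 0 < lb i
    · filter_upwards [(hlamlim i).eventually_const_lt (show lb i/2 < lb i by linarith)] with j hj _
      have hne : lam (Φ j) i ≠ 0 := ne_of_gt (lt_trans (half_pos hpos) hj)
      exact mul_pos hpos (hP2 (Φ j) i hne)
    · exact Eventually.of_forall (fun j hp => absurd hp hpos)
  have hevB : ∀ᶠ j in atTop, ∀ j', mb j' ≠ 0 → 0 < mb j' * h j' (y (Φ j)) := by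
    rw [eventually_all]
    intro j'
    rcases lt_trichotomy (mb j') 0 with hneg | hzero | hpos
    · filter_upwards [(hmulim j').eventually_lt_const (by linarith : mb j'/2 > mb j')]
        with j hj _
      have hmne : mu (Φ j) j' ≠ 0 := ne_of_lt (by linarith)
      have h3 := hP3 (Φ j) j' hmne
      have hh : h j' (y (Φ j)) < 0 := by nlinarith
      exact mul_pos_of_neg_of_neg hneg hh
    · exact Eventually.of_forall (fun j hne => absurd hzero hne)
    · filter_upwards [(hmulim j').eventually_const_lt (show mb j'/2 < mb j' by linarith)] with j hj _
      have hmne : mu (Φ j) j' ≠ 0 := ne_of_gt (lt_trans (half_pos hpos) hj)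
      have h3 := hP3 (Φ j) j' hmne
      have hh : 0 < h j' (y (Φ j)) := by nlinarith
      exact mul_pos hpos hh
  have hevC : ∀ᶠ j in atTop, ∀ i, Hb i ≠ 0 → Hb i * H i (y (Φ j)) < 0 := by
    rw [eventually_all]
    intro i
    rcases lt_trichotomy (Hb i) 0 with hneg | hzero | hpos
    · filter_upwards [(hHblim i).eventually_lt_const (by linarith : Hb i/2 > Hb i)]
        with j hj _
      have hne : eH (Φ j) i ≠ 0 := ne_of_lt (by linarith)
      have h7 := hP7 (Φ j) i hne
      have hh : 0 < H i (y (Φ j)) := by nlinarith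
      exact mul_neg_of_neg_of_pos hneg hh
    · exact Eventually.of_forall (fun j hne => absurd hzero hne)
    · filter_upwards [(hHblim i).eventually_const_lt (show Hb i/2 < Hb i by linarith)] with j hj _
      have hne : eH (Φ j) i ≠ 0 := ne_of_gt (lt_trans (half_pos hpos) hj)
      have h7 := hP7 (Φ j) i hne
      have hh : H i (y (Φ j)) < 0 := by nlinarith
      exact mul_neg_of_pos_of_neg hpos hh
  have hevD : ∀ᶠ j in atTop, ∀ i, 0 < Gb i → 0 < Gb i * G i (y (Φ j)) := by
    rw [eventually_all]
    intro i
    by_cases hpos : 0 < Gb i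
    · filter_upwards [(hGblim i).eventually_const_lt (show Gb i/2 < Gb i by linarith)] with j hj _
      have hne : eG (Φ j) i ≠ 0 := ne_of_gt (lt_trans (half_pos hpos) hj)
      exact mul_pos hpos (hP5 (Φ j) i hne)
    · exact Eventually.of_forall (fun j hp => absurd hp hpos)
  obtain ⟨J, hJ⟩ := eventually_atTop.1 (hevA.and (hevB.and (hevC.and hevD)))
  -- contradiction with generalized quasinormality
  refine hquasi ⟨lb, mb, Gb, Hb, hnontriv,
    ⟨c1, fun i _ => c2 i, c3, c4, fun i _ => c5 i, c6, c7, c8⟩,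
    fun k => y (Φ (k + J)), ?_, ?_⟩
  · exact hyconvΦ.comp (tendsto_add_atTop_nat J)
  · intro k
    obtain ⟨hA', hB', hC', hD'⟩ := hJ (k + J) (Nat.le_add_left J k)
    exact ⟨hA', hB', hC', hD'⟩
end

section
/- Let x* be feasible for the MPVC, let F(x) = (g_1(x),…,g_m(x), h_1(x),…,h_l(x), (G_1(x),H_1(x)),…,(G_q(x),H_q(x))) and Δ = (−∞,0]^m × {0}^l × Ω^q. Then the following are equivalent: (a) the only vector λ in the limiting normal cone N_Δ(F(x*)) with DF(x*)ᵀλ = 0 is λ = 0 (the GMFCQ of Definition 3.7 of Hoheisel–Kanzow–Outrata); (b) MPVC-GMFCQ holds at x*, i.e., the only multiplier (λ, μ, η^G, η^H) satisfying conditions (i)–(ii) at x* is the zero multiplier. -/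
open Filter Topology

/-- The Bouligand (contingent) tangent cone of a set `S` at `x`. -/
def tanCone {E : Type*} [NormedAddCommGroup E] [NormedSpace ℝ E] (S : Set E) (x : E) :
    Set E :=
  {d | ∃ (dk : ℕ → E) (tk : ℕ → ℝ), Tendsto dk atTop (𝓝 d) ∧ Tendsto tk atTop (𝓝 0)
      ∧ (∀ k, 0 < tk k) ∧ ∀ k, x + tk k • dk k ∈ S}

/-- The constraint map `F(x) = (g(x), h(x), (G_i(x), H_i(x))_i)`. -/
def FF {n m l q : ℕ} (g : Fin m → (Fin n → ℝ) → ℝ) (h : Fin l → (Fin n → ℝ) → ℝ)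
    (G H : Fin q → (Fin n → ℝ) → ℝ) (x : Fin n → ℝ) :
    (Fin m → ℝ) × (Fin l → ℝ) × (Fin q → ℝ × ℝ) :=
  (fun i => g i x, fun j => h j x, fun i => (G i x, H i x))

/-- The set `Δ = (−∞,0]^m × {0}^l × Ω^q`. -/
def DeltaVC {m l q : ℕ} : Set ((Fin m → ℝ) × (Fin l → ℝ) × (Fin q → ℝ × ℝ)) :=
  {y | (∀ i, y.1 i ≤ 0) ∧ (∀ j, y.2.1 j = 0) ∧ ∀ i, y.2.2 i ∈ OmegaVC}

/-- The Euclidean pairing on `ℝ^m × ℝ^l × (ℝ²)^q`. -/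
def dotY {m l q : ℕ} (v w : (Fin m → ℝ) × (Fin l → ℝ) × (Fin q → ℝ × ℝ)) : ℝ :=
  (∑ i, v.1 i * w.1 i) + (∑ j, v.2.1 j * w.2.1 j)
    + ∑ i, ((v.2.2 i).1 * (w.2.2 i).1 + (v.2.2 i).2 * (w.2.2 i).2)

/-- The Fréchet normal cone (polar of the tangent cone). -/
def frechetNormal {m l q : ℕ} (S : Set ((Fin m → ℝ) × (Fin l → ℝ) × (Fin q → ℝ × ℝ)))
    (y : (Fin m → ℝ) × (Fin l → ℝ) × (Fin q → ℝ × ℝ)) :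
    Set ((Fin m → ℝ) × (Fin l → ℝ) × (Fin q → ℝ × ℝ)) :=
  {v | ∀ d ∈ tanCone S y, dotY v d ≤ 0}

/-- The limiting (Mordukhovich) normal cone. -/
def limitingNormal {m l q : ℕ} (S : Set ((Fin m → ℝ) × (Fin l → ℝ) × (Fin q → ℝ × ℝ)))
    (y : (Fin m → ℝ) × (Fin l → ℝ) × (Fin q → ℝ × ℝ)) :
    Set ((Fin m → ℝ) × (Fin l → ℝ) × (Fin q → ℝ × ℝ)) :=
  {v | ∃ yk vk : ℕ → (Fin m → ℝ) × (Fin l → ℝ) × (Fin q → ℝ × ℝ),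
      Tendsto yk atTop (𝓝 y) ∧ (∀ k, yk k ∈ S) ∧ Tendsto vk atTop (𝓝 v)
      ∧ ∀ k, vk k ∈ frechetNormal S (yk k)}

section Helpers

lemma aux_tendsto_mul (t0 : ℝ) : Filter.Tendsto (fun k : ℕ => t0 * (1/(k+1))) Filter.atTop (nhds 0) := by
  simpa using tendsto_one_div_add_atTop_nhds_zero_nat.const_mul t0

lemma mem_tanCone_of_small {E : Type*} [NormedAddCommGroup E] [NormedSpace ℝ E]
    {S : Set E} {y d : E} {t0 : ℝ} (ht0 : 0 < t0)
    (h : ∀ t : ℝ, 0 < t → t ≤ t0 → y + t • d ∈ S) : d ∈ tanCone S y := by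
  refine ⟨fun _ => d, fun k => t0 * (1/(k+1)), tendsto_const_nhds, aux_tendsto_mul t0,
    fun k => by positivity, fun k => h _ (by positivity) ?_⟩
  have h1 : (1:ℝ)/((k:ℝ)+1) ≤ 1 := by
    rw [div_le_one (by positivity)]; linarith [Nat.cast_nonneg (α := ℝ) k]
  nlinarith

lemma tendsto_comp_cont {P γ : Type*} [TopologicalSpace P] [TopologicalSpace γ]
    {yk : ℕ → P} {y : P} (h : Filter.Tendsto yk Filter.atTop (nhds y))
    {f : P → γ} (hf : Continuous f) :
    Filter.Tendsto (fun k => f (yk k)) Filter.atTop (nhds (f y)) := (hf.tendsto y).comp h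

end Helpers
section Tests
variable {m l q : ℕ} {y v : (Fin m → ℝ) × (Fin l → ℝ) × (Fin q → ℝ × ℝ)}

lemma test_g (hy : y ∈ DeltaVC) (hv : v ∈ frechetNormal DeltaVC y)
    (i : Fin m) (c : ℝ) {t0 : ℝ} (ht0 : 0 < t0)
    (hc : ∀ t : ℝ, 0 < t → t ≤ t0 → y.1 i + t * c ≤ 0) : v.1 i * c ≤ 0 := by
  obtain ⟨h1, h2, h3⟩ := hy
  have hd : ((Pi.single i c, 0, 0) : (Fin m → ℝ) × (Fin l → ℝ) × (Fin q → ℝ × ℝ))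
      ∈ tanCone DeltaVC y := by
    apply mem_tanCone_of_small ht0
    intro t ht ht'
    refine ⟨fun i' => ?_, fun j => by simpa using h2 j, fun i' => by simpa using h3 i'⟩
    rcases eq_or_ne i' i with rfl | hne
    · simpa using hc t ht ht'
    · simpa [Pi.single_apply, hne] using h1 i'
  have := hv _ hd
  simpa [dotY, Pi.single_apply, mul_ite, Finset.sum_ite_eq'] using this

lemma test_w (hy : y ∈ DeltaVC) (hv : v ∈ frechetNormal DeltaVC y)
    (i : Fin q) (c1 c2 : ℝ) {t0 : ℝ} (ht0 : 0 < t0)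
    (hc : ∀ t : ℝ, 0 < t → t ≤ t0 →
      ((y.2.2 i).1 + t * c1, (y.2.2 i).2 + t * c2) ∈ OmegaVC) :
    (v.2.2 i).1 * c1 + (v.2.2 i).2 * c2 ≤ 0 := by
  obtain ⟨h1, h2, h3⟩ := hy
  have hd : ((0, 0, Pi.single i (c1, c2)) : (Fin m → ℝ) × (Fin l → ℝ) × (Fin q → ℝ × ℝ))
      ∈ tanCone DeltaVC y := by
    apply mem_tanCone_of_small ht0
    intro t ht ht'
    refine ⟨fun i' => by simpa using h1 i', fun j => by simpa using h2 j, fun i' => ?_⟩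
    rcases eq_or_ne i' i with rfl | hne
    · simpa [Prod.smul_mk, smul_eq_mul, Prod.add_def] using hc t ht ht'
    · simpa [Pi.single_apply, hne] using h3 i'
  have hdot : dotY v (0, 0, Pi.single i (c1, c2)) =
      (v.2.2 i).1 * c1 + (v.2.2 i).2 * c2 := by
    simp only [dotY, Pi.zero_apply, mul_zero, Finset.sum_const_zero, zero_add, add_zero]
    rw [Finset.sum_eq_single i]
    · simp
    · intro b _ hb; simp [Pi.single_eq_of_ne hb]
    · simp
  have := hv _ hd
  rwa [hdot] at this

end Tests
section FB

lemma mem_OmegaVC {x y : ℝ} (h1 : 0 ≤ y) (h2 : x * y ≤ 0) : (x, y) ∈ OmegaVC := ⟨h1, h2⟩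

variable {m l q : ℕ} {y v : (Fin m → ℝ) × (Fin l → ℝ) × (Fin q → ℝ × ℝ)}

lemma frechet_bounds (hy : y ∈ DeltaVC) (hv : v ∈ frechetNormal DeltaVC y) :
    (∀ i, 0 ≤ v.1 i) ∧ (∀ i, y.1 i ≠ 0 → v.1 i = 0) ∧
    (∀ i, 0 < (y.2.2 i).2 →
      (v.2.2 i).2 = 0 ∧ 0 ≤ (v.2.2 i).1 ∧ ((y.2.2 i).1 < 0 → (v.2.2 i).1 = 0)) ∧
    (∀ i, (y.2.2 i).2 = 0 → (v.2.2 i).1 = 0 ∧ ((y.2.2 i).1 ≤ 0 → (v.2.2 i).2 ≤ 0)) := by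
  have hzero : ∀ i, y.1 i ≠ 0 → v.1 i = 0 := by
    intro i hne
    have hlt : y.1 i < 0 := lt_of_le_of_ne (hy.1 i) hne
    have h1 : v.1 i * 1 ≤ 0 := test_g hy hv i 1 (neg_pos.2 hlt)
      (fun t ht ht' => by linarith)
    have h2 : v.1 i * (-1) ≤ 0 := test_g hy hv i (-1) one_pos
      (fun t ht ht' => by linarith)
    linarith
  have hnn : ∀ i, 0 ≤ v.1 i := by
    intro i
    rcases eq_or_ne (y.1 i) 0 with h0 | hne
    · have h2 : v.1 i * (-1) ≤ 0 := test_g hy hv i (-1) one_pos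
        (fun t ht ht' => by rw [h0]; linarith)
      linarith
    · rw [hzero i hne]
  refine ⟨hnn, hzero, ?_, ?_⟩
  · intro i hb
    have ha : (y.2.2 i).1 ≤ 0 := by nlinarith [(hy.2.2 i).2, (hy.2.2 i).1]
    have hw1 : (v.2.2 i).1 * 0 + (v.2.2 i).2 * 1 ≤ 0 := test_w hy hv i 0 1 one_pos
      (fun t ht ht' => mem_OmegaVC (by nlinarith) (by nlinarith))
    have hw2 : (v.2.2 i).1 * 0 + (v.2.2 i).2 * (-1) ≤ 0 := test_w hy hv i 0 (-1) hb
      (fun t ht ht' => mem_OmegaVC (by nlinarith) (by nlinarith))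
    have hu1 : (v.2.2 i).1 * (-1) + (v.2.2 i).2 * 0 ≤ 0 := test_w hy hv i (-1) 0 one_pos
      (fun t ht ht' => mem_OmegaVC (by nlinarith) (by nlinarith))
    refine ⟨by linarith, by linarith, fun halt => ?_⟩
    have hu2 : (v.2.2 i).1 * 1 + (v.2.2 i).2 * 0 ≤ 0 := test_w hy hv i 1 0 (neg_pos.2 halt)
      (fun t ht ht' => mem_OmegaVC (by nlinarith) (by nlinarith))
    linarith
  · intro i hb
    have hu1 : (v.2.2 i).1 * 1 + (v.2.2 i).2 * 0 ≤ 0 := test_w hy hv i 1 0 one_pos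
      (fun t ht ht' => by rw [hb]; exact mem_OmegaVC (by nlinarith) (by nlinarith))
    have hu2 : (v.2.2 i).1 * (-1) + (v.2.2 i).2 * 0 ≤ 0 := test_w hy hv i (-1) 0 one_pos
      (fun t ht ht' => by rw [hb]; exact mem_OmegaVC (by nlinarith) (by nlinarith))
    refine ⟨by linarith, fun ha => ?_⟩
    have hw1 : (v.2.2 i).1 * 0 + (v.2.2 i).2 * 1 ≤ 0 := test_w hy hv i 0 1 one_pos
      (fun t ht ht' => by rw [hb]; exact mem_OmegaVC (by nlinarith) (by nlinarith))
    linarith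

end FB
section TB
variable {m l q : ℕ} {y d : (Fin m → ℝ) × (Fin l → ℝ) × (Fin q → ℝ × ℝ)}

lemma tangent_bounds (hy : y ∈ DeltaVC) (hd : d ∈ tanCone DeltaVC y) :
    (∀ i, y.1 i = 0 → d.1 i ≤ 0) ∧ (∀ j, d.2.1 j = 0) ∧
    (∀ i, (y.2.2 i).2 = 0 → 0 ≤ (d.2.2 i).2) ∧
    (∀ i, (y.2.2 i).2 = 0 → 0 < (y.2.2 i).1 → (d.2.2 i).2 = 0) ∧
    (∀ i, 0 < (y.2.2 i).2 → (y.2.2 i).1 = 0 → (d.2.2 i).1 ≤ 0) := by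
  obtain ⟨dk, tk, hdk, htk, htkpos, hmem⟩ := hd
  have c1 : ∀ i, Filter.Tendsto (fun k => (dk k).1 i) Filter.atTop (nhds (d.1 i)) :=
    fun i => tendsto_comp_cont hdk (f := fun p => p.1 i) (by fun_prop)
  have c2 : ∀ j, Filter.Tendsto (fun k => (dk k).2.1 j) Filter.atTop (nhds (d.2.1 j)) :=
    fun j => tendsto_comp_cont hdk (f := fun p => p.2.1 j) (by fun_prop)
  have c3 : ∀ i, Filter.Tendsto (fun k => ((dk k).2.2 i).1) Filter.atTop (nhds ((d.2.2 i).1)) :=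
    fun i => tendsto_comp_cont hdk (f := fun p => (p.2.2 i).1) (by fun_prop)
  have c4 : ∀ i, Filter.Tendsto (fun k => ((dk k).2.2 i).2) Filter.atTop (nhds ((d.2.2 i).2)) :=
    fun i => tendsto_comp_cont hdk (f := fun p => (p.2.2 i).2) (by fun_prop)
  have hmem' : ∀ k, (∀ i, y.1 i + tk k * (dk k).1 i ≤ 0) ∧
      (∀ j, y.2.1 j + tk k * (dk k).2.1 j = 0) ∧
      ∀ i, 0 ≤ (y.2.2 i).2 + tk k * ((dk k).2.2 i).2 ∧
        ((y.2.2 i).1 + tk k * ((dk k).2.2 i).1) *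
          ((y.2.2 i).2 + tk k * ((dk k).2.2 i).2) ≤ 0 := by
    intro k
    have h := hmem k
    simpa only [DeltaVC, OmegaVC, Set.mem_setOf_eq, Prod.fst_add, Prod.snd_add,
      Prod.smul_fst, Prod.smul_snd, Pi.add_apply, Pi.smul_apply, smul_eq_mul] using h
  refine ⟨?_, ?_, ?_, ?_, ?_⟩
  · intro i h0
    refine le_of_tendsto (c1 i) (Filter.Eventually.of_forall fun k => ?_)
    have h := (hmem' k).1 i
    rw [h0] at h
    nlinarith [htkpos k]
  · intro j
    have hz : ∀ k, (dk k).2.1 j = 0 := by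
      intro k
      have h := (hmem' k).2.1 j
      rw [hy.2.1 j] at h
      have := (htkpos k).ne'
      nlinarith [htkpos k, sq_nonneg ((dk k).2.1 j)]
    refine tendsto_nhds_unique (c2 j) ?_
    rw [show (fun k => (dk k).2.1 j) = fun _ => (0:ℝ) from funext hz]
    exact tendsto_const_nhds
  · intro i hb
    refine ge_of_tendsto (c4 i) (Filter.Eventually.of_forall fun k => ?_)
    have h := ((hmem' k).2.2 i).1
    rw [hb] at h
    nlinarith [htkpos k]
  · intro i hb ha
    have hge : 0 ≤ (d.2.2 i).2 := by
      refine ge_of_tendsto (c4 i) (Filter.Eventually.of_forall fun k => ?_)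
      have h := ((hmem' k).2.2 i).1
      rw [hb] at h
      nlinarith [htkpos k]
    have htd1 : Filter.Tendsto (fun k => tk k * ((dk k).2.2 i).1) Filter.atTop (nhds 0) := by
      simpa using htk.mul (c3 i)
    have hev : ∀ᶠ k in Filter.atTop, -(y.2.2 i).1 < tk k * ((dk k).2.2 i).1 :=
      htd1.eventually_const_lt (by linarith)
    have hle : (d.2.2 i).2 ≤ 0 := by
      refine le_of_tendsto (c4 i) (hev.mono fun k hk => ?_)
      have h := ((hmem' k).2.2 i).2
      rw [hb] at h
      have hA : 0 < (y.2.2 i).1 + tk k * ((dk k).2.2 i).1 := by linarith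
      have hB : tk k * ((dk k).2.2 i).2 ≤ 0 := by
        by_contra hc
        push_neg at hc
        nlinarith [mul_pos hA hc]
      nlinarith [htkpos k]
    linarith
  · intro i hb ha
    have htd2 : Filter.Tendsto (fun k => tk k * ((dk k).2.2 i).2) Filter.atTop (nhds 0) := by
      simpa using htk.mul (c4 i)
    have hev : ∀ᶠ k in Filter.atTop, -(y.2.2 i).2 < tk k * ((dk k).2.2 i).2 :=
      htd2.eventually_const_lt (by linarith)
    refine le_of_tendsto (c3 i) (hev.mono fun k hk => ?_)
    have h := ((hmem' k).2.2 i).2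
    rw [ha] at h
    have hA : 0 < (y.2.2 i).2 + tk k * ((dk k).2.2 i).2 := by linarith
    have hB : tk k * ((dk k).2.2 i).1 ≤ 0 := by
      by_contra hc
      push_neg at hc
      nlinarith [mul_pos hc hA]
    nlinarith [htkpos k]

end TB
section FD

lemma fderiv_FF {n m l q : ℕ} (g : Fin m → (Fin n → ℝ) → ℝ) (h : Fin l → (Fin n → ℝ) → ℝ)
    (G H : Fin q → (Fin n → ℝ) → ℝ)
    (hg : ∀ i, ContDiff ℝ 1 (g i)) (hh : ∀ j, ContDiff ℝ 1 (h j))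
    (hG : ∀ i, ContDiff ℝ 1 (G i)) (hH : ∀ i, ContDiff ℝ 1 (H i)) (xs : Fin n → ℝ)
    (v : Fin n → ℝ) :
    fderiv ℝ (FF g h G H) xs v =
      (fun i => fderiv ℝ (g i) xs v, fun j => fderiv ℝ (h j) xs v,
        fun i => (fderiv ℝ (G i) xs v, fderiv ℝ (H i) xs v)) := by
  have dg : ∀ i, HasFDerivAt (g i) (fderiv ℝ (g i) xs) xs :=
    fun i => (((hg i).differentiable one_ne_zero) xs).hasFDerivAt
  have dh : ∀ j, HasFDerivAt (h j) (fderiv ℝ (h j) xs) xs :=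
    fun j => (((hh j).differentiable one_ne_zero) xs).hasFDerivAt
  have dG : ∀ i, HasFDerivAt (G i) (fderiv ℝ (G i) xs) xs :=
    fun i => (((hG i).differentiable one_ne_zero) xs).hasFDerivAt
  have dH : ∀ i, HasFDerivAt (H i) (fderiv ℝ (H i) xs) xs :=
    fun i => (((hH i).differentiable one_ne_zero) xs).hasFDerivAt
  have hD : HasFDerivAt (FF g h G H)
      ((ContinuousLinearMap.pi fun i => fderiv ℝ (g i) xs).prod
        ((ContinuousLinearMap.pi fun j => fderiv ℝ (h j) xs).prod
          (ContinuousLinearMap.pi fun i => (fderiv ℝ (G i) xs).prod (fderiv ℝ (H i) xs)))) xs :=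
    HasFDerivAt.prodMk (hasFDerivAt_pi.2 dg) (HasFDerivAt.prodMk (hasFDerivAt_pi.2 dh)
      (hasFDerivAt_pi.2 fun i => (dG i).prodMk (dH i)))
  rw [hD.fderiv]
  rfl

end FD
section LimHelp

lemma lim_zero {f : ℕ → ℝ} {a : ℝ} (hf : Filter.Tendsto f Filter.atTop (nhds a))
    (h : ∀ᶠ k in Filter.atTop, f k = 0) : a = 0 :=
  tendsto_nhds_unique (hf.congr' (h.mono fun _ hk => hk)) tendsto_const_nhds

lemma lim_nonneg {f : ℕ → ℝ} {a : ℝ} (hf : Filter.Tendsto f Filter.atTop (nhds a))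
    (h : ∀ᶠ k in Filter.atTop, 0 ≤ f k) : 0 ≤ a := ge_of_tendsto hf h

lemma lim_nonpos {f : ℕ → ℝ} {a : ℝ} (hf : Filter.Tendsto f Filter.atTop (nhds a))
    (h : ∀ᶠ k in Filter.atTop, f k ≤ 0) : a ≤ 0 := le_of_tendsto hf h

end LimHelp

/-- At a feasible point `xs`, the abstract GMFCQ (only `λ = 0` in the limiting
normal cone `N_Δ(F(xs))` satisfies `DF(xs)ᵀ λ = 0`) is equivalent to MPVC-GMFCQ (the only
multiplier satisfying conditions (i)–(ii) at `xs` is zero). -/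
theorem GMFCQ_abstract_iff_MPVC_GMFCQ {n m l q : ℕ}
    (g : Fin m → (Fin n → ℝ) → ℝ) (h : Fin l → (Fin n → ℝ) → ℝ)
    (G H : Fin q → (Fin n → ℝ) → ℝ)
    (hg : ∀ i, ContDiff ℝ 1 (g i)) (hh : ∀ j, ContDiff ℝ 1 (h j))
    (hG : ∀ i, ContDiff ℝ 1 (G i)) (hH : ∀ i, ContDiff ℝ 1 (H i))
    (xs : Fin n → ℝ) (hxs : xs ∈ feasSet g h G H) :
    (∀ lam ∈ limitingNormal DeltaVC (FF g h G H xs),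
        (∀ v : Fin n → ℝ, dotY lam (fderiv ℝ (FF g h G H) xs v) = 0) → lam = 0)
    ↔ (∀ (lam : Fin m → ℝ) (mu : Fin l → ℝ) (etaG etaH : Fin q → ℝ),
        MultCond g h G H xs lam mu etaG etaH → lam = 0 ∧ mu = 0 ∧ etaG = 0 ∧ etaH = 0) := by
  classical
  obtain ⟨hg0, hh0, hH0, hGH0⟩ := hxs
  constructor
  · -- abstract GMFCQ → MPVC-GMFCQ
    intro habs lam mu etaG etaH hmc
    obtain ⟨heq, hl1, hl2, hG1, hG2, hH1, hH2, hH3⟩ := hmc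
    set lv : (Fin m → ℝ) × (Fin l → ℝ) × (Fin q → ℝ × ℝ) :=
      (lam, mu, fun i => (etaG i, -etaH i)) with hlv
    set Yk : ℕ → ((Fin m → ℝ) × (Fin l → ℝ) × (Fin q → ℝ × ℝ)) := fun k =>
      ((fun i => g i xs), (fun _ => (0:ℝ)), fun i =>
        if H i xs = 0 ∧ G i xs = 0 then
          (if 0 < etaG i then ((0:ℝ), (1:ℝ)/(k+1))
           else if etaH i < 0 then ((1:ℝ)/(k+1), (0:ℝ)) else ((0:ℝ), (0:ℝ)))
        else (G i xs, H i xs)) with hYk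
    have hYmem : ∀ k, Yk k ∈ DeltaVC := by
      intro k
      refine ⟨fun i => hg0 i, fun j => rfl, fun i => ?_⟩
      simp only [hYk]
      by_cases h00 : H i xs = 0 ∧ G i xs = 0
      · rw [if_pos h00]
        by_cases hGp : 0 < etaG i
        · rw [if_pos hGp]
          exact mem_OmegaVC (by positivity) (by simp)
        · rw [if_neg hGp]
          by_cases hHn : etaH i < 0
          · rw [if_pos hHn]; exact mem_OmegaVC le_rfl (by simp)
          · rw [if_neg hHn]; exact mem_OmegaVC le_rfl (by simp)
      · rw [if_neg h00]; exact mem_OmegaVC (hH0 i) (hGH0 i)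
    have hYtend : Filter.Tendsto Yk Filter.atTop (nhds (FF g h G H xs)) := by
      have hFFeq : FF g h G H xs =
          ((fun i => g i xs), (fun _ => (0:ℝ)), fun i => (G i xs, H i xs)) := by
        refine Prod.ext rfl (Prod.ext (funext fun j => hh0 j) rfl)
      have t3 : Filter.Tendsto (fun k : ℕ => (fun i : Fin q =>
          if H i xs = 0 ∧ G i xs = 0 then
            (if 0 < etaG i then ((0:ℝ), (1:ℝ)/(k+1))
             else if etaH i < 0 then ((1:ℝ)/(k+1), (0:ℝ)) else ((0:ℝ), (0:ℝ)))
          else (G i xs, H i xs))) Filter.atTop (nhds (fun i => (G i xs, H i xs))) := by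
        refine tendsto_pi_nhds.2 fun i => ?_
        by_cases h00 : H i xs = 0 ∧ G i xs = 0
        · rw [show (G i xs, H i xs) = ((0:ℝ), (0:ℝ)) by rw [h00.1, h00.2]]
          simp only [if_pos h00]
          by_cases hGp : 0 < etaG i
          · simp only [if_pos hGp]
            exact Filter.Tendsto.prodMk_nhds tendsto_const_nhds
              tendsto_one_div_add_atTop_nhds_zero_nat
          · simp only [if_neg hGp]
            by_cases hHn : etaH i < 0
            · simp only [if_pos hHn]
              exact Filter.Tendsto.prodMk_nhds tendsto_one_div_add_atTop_nhds_zero_nat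
                tendsto_const_nhds
            · simp only [if_neg hHn]; exact tendsto_const_nhds
        · simp only [if_neg h00]; exact tendsto_const_nhds
      rw [hFFeq, hYk]
      exact Filter.Tendsto.prodMk_nhds tendsto_const_nhds
        (Filter.Tendsto.prodMk_nhds tendsto_const_nhds t3)
    have hfre : ∀ k, lv ∈ frechetNormal DeltaVC (Yk k) := by
      intro k d hd
      obtain ⟨tb1, tb2, tb3, tb4, tb5⟩ := tangent_bounds (hYmem k) hd
      have hsum1 : ∑ i, lv.1 i * d.1 i ≤ 0 := by
        refine Finset.sum_nonpos fun i _ => ?_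
        rcases eq_or_ne (g i xs) 0 with h0 | hne
        · exact mul_nonpos_of_nonneg_of_nonpos (hl1 i h0) (tb1 i h0)
        · simp [hlv, hl2 i hne]
      have hsum2 : ∑ j, lv.2.1 j * d.2.1 j ≤ 0 := by
        refine Finset.sum_nonpos fun j _ => ?_
        simp [tb2 j]
      have hsum3 : ∑ i, ((lv.2.2 i).1 * (d.2.2 i).1 + (lv.2.2 i).2 * (d.2.2 i).2) ≤ 0 := by
        refine Finset.sum_nonpos fun i _ => ?_
        have hlv1 : (lv.2.2 i).1 = etaG i := rfl
        have hlv2 : (lv.2.2 i).2 = -etaH i := rfl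
        rw [hlv1, hlv2]
        by_cases h00 : H i xs = 0 ∧ G i xs = 0
        · have hY : (Yk k).2.2 i =
              (if 0 < etaG i then ((0:ℝ), (1:ℝ)/(k+1))
               else if etaH i < 0 then ((1:ℝ)/(k+1), (0:ℝ)) else ((0:ℝ), (0:ℝ))) := by
            simp only [hYk, if_pos h00]
          by_cases hGp : 0 < etaG i
          · have hHz : etaH i = 0 := by
              have := hH3 i h00
              rcases mul_eq_zero.1 this with h' | h'
              · exact h'
              · exact absurd h' (ne_of_gt hGp)
            have hd1 : (d.2.2 i).1 ≤ 0 := by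
              refine tb5 i ?_ ?_
              · rw [hY, if_pos hGp]; positivity
              · rw [hY, if_pos hGp]
            rw [hHz]
            simp only [neg_zero, zero_mul, add_zero]
            exact mul_nonpos_of_nonneg_of_nonpos hGp.le hd1
          · have hGz : etaG i = 0 := le_antisymm (not_lt.1 hGp) (hG2 i (Or.inr h00))
            by_cases hHn : etaH i < 0
            · have hd2 : (d.2.2 i).2 = 0 := by
                refine tb4 i ?_ ?_
                · rw [hY, if_neg hGp, if_pos hHn]
                · rw [hY, if_neg hGp, if_pos hHn]; positivity
              rw [hGz, hd2]; simp
            · have hd2 : 0 ≤ (d.2.2 i).2 := by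
                refine tb3 i ?_
                rw [hY, if_neg hGp, if_neg hHn]
              rw [hGz]
              simp only [zero_mul, zero_add]
              exact mul_nonpos_of_nonpos_of_nonneg (by linarith [not_lt.1 hHn]) hd2
        · have hY : (Yk k).2.2 i = (G i xs, H i xs) := by
            simp only [hYk, if_neg h00]
          rcases (hH0 i).lt_or_eq with hHp | hHz
          · have hHz' : etaH i = 0 := hH1 i hHp
            rcases lt_trichotomy (G i xs) 0 with hGlt | hGeq | hGgt
            · rw [hG1 i (Or.inl ⟨hHp, hGlt⟩), hHz']; simp
            · have hd1 : (d.2.2 i).1 ≤ 0 := by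
                refine tb5 i ?_ ?_ <;> rw [hY]
                · exact hHp
                · exact hGeq
              rw [hHz']
              simp only [neg_zero, zero_mul, add_zero]
              exact mul_nonpos_of_nonneg_of_nonpos (hG2 i (Or.inl ⟨hHp, hGeq⟩)) hd1
            · exact absurd (hGH0 i) (by nlinarith)
          · have hHez : H i xs = 0 := hHz.symm
            rcases lt_trichotomy (G i xs) 0 with hGlt | hGeq | hGgt
            · have hd2 : 0 ≤ (d.2.2 i).2 := by
                refine tb3 i ?_; rw [hY]; exact hHez
              rw [hG1 i (Or.inr (Or.inl ⟨hHez, hGlt⟩))]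
              simp only [zero_mul, zero_add]
              exact mul_nonpos_of_nonpos_of_nonneg (by linarith [hH2 i ⟨hHez, hGlt⟩]) hd2
            · exact absurd ⟨hHez, hGeq⟩ h00
            · have hd2 : (d.2.2 i).2 = 0 := by
                refine tb4 i ?_ ?_ <;> rw [hY]
                · exact hHez
                · exact hGgt
              rw [hG1 i (Or.inr (Or.inr ⟨hHez, hGgt⟩)), hd2]; simp
      calc dotY lv d = (∑ i, lv.1 i * d.1 i) + (∑ j, lv.2.1 j * d.2.1 j)
            + ∑ i, ((lv.2.2 i).1 * (d.2.2 i).1 + (lv.2.2 i).2 * (d.2.2 i).2) := rfl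
        _ ≤ 0 := by linarith
    have hmemN : lv ∈ limitingNormal DeltaVC (FF g h G H xs) :=
      ⟨Yk, fun _ => lv, hYtend, hYmem, tendsto_const_nhds, hfre⟩
    have hadj : ∀ v : Fin n → ℝ, dotY lv (fderiv ℝ (FF g h G H) xs v) = 0 := by
      intro v
      rw [fderiv_FF g h G H hg hh hG hH xs v]
      have key : (∑ i, lam i * fderiv ℝ (g i) xs v) + (∑ j, mu j * fderiv ℝ (h j) xs v)
          + (∑ i, etaG i * fderiv ℝ (G i) xs v) - (∑ i, etaH i * fderiv ℝ (H i) xs v)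
          = 0 := by
        have := congrArg (fun (L : (Fin n → ℝ) →L[ℝ] ℝ) => L v) heq
        simpa [ContinuousLinearMap.sum_apply, ContinuousLinearMap.smul_apply,
          smul_eq_mul] using this
      show (∑ i, lam i * fderiv ℝ (g i) xs v) + (∑ j, mu j * fderiv ℝ (h j) xs v)
          + ∑ i, (etaG i * fderiv ℝ (G i) xs v + (-etaH i) * fderiv ℝ (H i) xs v) = 0
      rw [Finset.sum_add_distrib]
      have : ∑ i, (-etaH i) * fderiv ℝ (H i) xs v
          = -∑ i, etaH i * fderiv ℝ (H i) xs v := by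
        rw [← Finset.sum_neg_distrib]
        exact Finset.sum_congr rfl fun i _ => by ring
      rw [this]
      linarith
    have hz := habs lv hmemN hadj
    have h1 : lam = 0 := congrArg Prod.fst hz
    have h2 : mu = 0 := congrArg (fun p => p.2.1) hz
    have h3 := congrArg (fun p => p.2.2) hz
    refine ⟨h1, h2, funext fun i => ?_, funext fun i => ?_⟩
    · have := congrFun h3 i
      simpa using congrArg Prod.fst this
    · have := congrFun h3 i
      have := congrArg Prod.snd this
      simpa [neg_eq_zero, hlv] using this
  · -- MPVC-GMFCQ → abstract GMFCQ
    intro hmpvc lv hlim hadj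
    obtain ⟨yk, vk, hyk, hykmem, hvk, hvkf⟩ := hlim
    have fb := fun k => frechet_bounds (hykmem k) (hvkf k)
    have cy1 : ∀ i, Filter.Tendsto (fun k => (yk k).1 i) Filter.atTop (nhds (g i xs)) :=
      fun i => tendsto_comp_cont hyk (f := fun p => p.1 i) (by fun_prop)
    have cyA : ∀ i, Filter.Tendsto (fun k => ((yk k).2.2 i).1) Filter.atTop
        (nhds (G i xs)) :=
      fun i => tendsto_comp_cont hyk (f := fun p => (p.2.2 i).1) (by fun_prop)
    have cyB : ∀ i, Filter.Tendsto (fun k => ((yk k).2.2 i).2) Filter.atTop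
        (nhds (H i xs)) :=
      fun i => tendsto_comp_cont hyk (f := fun p => (p.2.2 i).2) (by fun_prop)
    have cv1 : ∀ i, Filter.Tendsto (fun k => (vk k).1 i) Filter.atTop (nhds (lv.1 i)) :=
      fun i => tendsto_comp_cont hvk (f := fun p => p.1 i) (by fun_prop)
    have cvU : ∀ i, Filter.Tendsto (fun k => ((vk k).2.2 i).1) Filter.atTop
        (nhds ((lv.2.2 i).1)) :=
      fun i => tendsto_comp_cont hvk (f := fun p => (p.2.2 i).1) (by fun_prop)
    have cvW : ∀ i, Filter.Tendsto (fun k => ((vk k).2.2 i).2) Filter.atTop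
        (nhds ((lv.2.2 i).2)) :=
      fun i => tendsto_comp_cont hvk (f := fun p => (p.2.2 i).2) (by fun_prop)
    -- per-k sign facts
    have hbk : ∀ k i, 0 ≤ ((yk k).2.2 i).2 := fun k i => ((hykmem k).2.2 i).1
    have habk : ∀ k i, ((yk k).2.2 i).1 * ((yk k).2.2 i).2 ≤ 0 :=
      fun k i => ((hykmem k).2.2 i).2
    have hMC : MultCond g h G H xs lv.1 lv.2.1 (fun i => (lv.2.2 i).1)
        (fun i => -(lv.2.2 i).2) := by
      refine ⟨?_, ?_, ?_, ?_, ?_, ?_, ?_, ?_⟩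
      · -- equation (i)
        apply ContinuousLinearMap.ext
        intro v
        have hv := hadj v
        rw [fderiv_FF g h G H hg hh hG hH xs v] at hv
        have hv' : (∑ i, lv.1 i * fderiv ℝ (g i) xs v)
            + (∑ j, lv.2.1 j * fderiv ℝ (h j) xs v)
            + ((∑ i, (lv.2.2 i).1 * fderiv ℝ (G i) xs v)
              + (∑ i, (lv.2.2 i).2 * fderiv ℝ (H i) xs v)) = 0 := by
          rw [← Finset.sum_add_distrib]
          exact hv
        have hneg : ∑ i, (-(lv.2.2 i).2) * fderiv ℝ (H i) xs v
            = -∑ i, (lv.2.2 i).2 * fderiv ℝ (H i) xs v := by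
          rw [← Finset.sum_neg_distrib]
          exact Finset.sum_congr rfl fun i _ => by ring
        simp only [ContinuousLinearMap.add_apply, ContinuousLinearMap.sub_apply,
          ContinuousLinearMap.sum_apply, ContinuousLinearMap.smul_apply, smul_eq_mul,
          ContinuousLinearMap.zero_apply, hneg]
        linarith
      · intro i _
        exact lim_nonneg (cv1 i) (Filter.Eventually.of_forall fun k => (fb k).1 i)
      · intro i hne
        have hlt : g i xs < 0 := lt_of_le_of_ne (hg0 i) hne
        have hev := (cy1 i).eventually_lt_const (show g i xs < 0 from hlt)
        exact lim_zero (cv1 i) (hev.mono fun k hk => (fb k).2.1 i (ne_of_lt hk))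
      · -- etaG = 0 cases
        intro i hcase
        rcases hcase with ⟨hHp, hGlt⟩ | ⟨hHz, hGlt⟩ | ⟨hHz, hGgt⟩
        · have ev1 := (cyB i).eventually_const_lt hHp
          have ev2 := (cyA i).eventually_lt_const hGlt
          exact lim_zero (cvU i) ((ev1.and ev2).mono fun k ⟨hk1, hk2⟩ =>
            ((fb k).2.2.1 i hk1).2.2 hk2)
        · have ev2 := (cyA i).eventually_lt_const hGlt
          refine lim_zero (cvU i) (ev2.mono fun k hk2 => ?_)
          rcases (hbk k i).lt_or_eq with hp | hz
          · exact ((fb k).2.2.1 i hp).2.2 hk2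
          · exact ((fb k).2.2.2 i hz.symm).1
        · have ev2 := (cyA i).eventually_const_lt hGgt
          refine lim_zero (cvU i) (ev2.mono fun k hk2 => ?_)
          have hz : ((yk k).2.2 i).2 = 0 := by nlinarith [hbk k i, habk k i]
          exact ((fb k).2.2.2 i hz).1
      · -- etaG ≥ 0 cases
        intro i hcase
        rcases hcase with ⟨hHp, _⟩ | ⟨hHz, hGz⟩
        · have ev1 := (cyB i).eventually_const_lt hHp
          exact lim_nonneg (cvU i) (ev1.mono fun k hk1 => ((fb k).2.2.1 i hk1).2.1)
        · refine lim_nonneg (cvU i) (Filter.Eventually.of_forall fun k => ?_)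
          rcases (hbk k i).lt_or_eq with hp | hz
          · exact ((fb k).2.2.1 i hp).2.1
          · exact le_of_eq (((fb k).2.2.2 i hz.symm).1).symm
      · -- 0 < H → etaH = 0
        intro i hHp
        have ev1 := (cyB i).eventually_const_lt hHp
        have : (lv.2.2 i).2 = 0 :=
          lim_zero (cvW i) (ev1.mono fun k hk1 => ((fb k).2.2.1 i hk1).1)
        simp [this]
      · -- H = 0 ∧ G < 0 → 0 ≤ etaH
        intro i ⟨hHz, hGlt⟩
        have ev2 := (cyA i).eventually_lt_const hGlt
        have hle : (lv.2.2 i).2 ≤ 0 := by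
          refine lim_nonpos (cvW i) (ev2.mono fun k hk2 => ?_)
          rcases (hbk k i).lt_or_eq with hp | hz
          · exact le_of_eq ((fb k).2.2.1 i hp).1
          · exact ((fb k).2.2.2 i hz.symm).2 hk2.le
        show 0 ≤ -(lv.2.2 i).2
        linarith
      · -- H = 0 ∧ G = 0 → etaH * etaG = 0
        intro i _
        have hprod : ∀ k, ((vk k).2.2 i).1 * ((vk k).2.2 i).2 = 0 := by
          intro k
          rcases (hbk k i).lt_or_eq with hp | hz
          · rw [((fb k).2.2.1 i hp).1, mul_zero]
          · rw [((fb k).2.2.2 i hz.symm).1, zero_mul]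
        have : (lv.2.2 i).1 * (lv.2.2 i).2 = 0 :=
          lim_zero ((cvU i).mul (cvW i)) (Filter.Eventually.of_forall hprod)
        show -(lv.2.2 i).2 * (lv.2.2 i).1 = 0
        linear_combination -this
    obtain ⟨e1, e2, e3, e4⟩ := hmpvc lv.1 lv.2.1 (fun i => (lv.2.2 i).1)
      (fun i => -(lv.2.2 i).2) hMC
    have h3 : lv.2.2 = 0 := by
      funext i
      refine Prod.ext (congrFun e3 i) ?_
      have := congrFun e4 i
      simpa [neg_eq_zero] using this
    exact Prod.ext e1 (Prod.ext e2 h3)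
end

section
/- Consider the MPVC in ℝ² with m = 1, l = 0, q = 1 given by g(x) = x₁ + x₂, H(x) = x₁, G(x) = x₁² − x₂². The point x* = (0,0) is feasible, and MPVC-generalized quasinormality FAILS at x*: the nonzero multiplier (λ, η^G, η^H) = (0, 1, 0) satisfies conditions (i)–(ii) at x* (note ∇G(x*) = (0,0)), and the sequence x^k = (1/k, 0) converges to x* with G(x^k) = 1/k² > 0 for all k, so the sequence condition (iii) of quasinormality is met. -/
open Filter Topology

lemma fderivG_zero :
    fderiv ℝ (fun x : ℝ × ℝ => x.1 ^ 2 - x.2 ^ 2) ((0:ℝ), (0:ℝ)) = 0 := by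
  have h1 : HasFDerivAt (fun x : ℝ × ℝ => x.1 ^ 2 - x.2 ^ 2) (0 : (ℝ × ℝ) →L[ℝ] ℝ) ((0:ℝ), (0:ℝ)) := by
    have ha : HasFDerivAt (fun x : ℝ × ℝ => x.1)
        (ContinuousLinearMap.fst ℝ ℝ ℝ) ((0:ℝ), (0:ℝ)) := hasFDerivAt_fst
    have hb : HasFDerivAt (fun x : ℝ × ℝ => x.2)
        (ContinuousLinearMap.snd ℝ ℝ ℝ) ((0:ℝ), (0:ℝ)) := hasFDerivAt_snd
    have := (ha.mul ha).sub (hb.mul hb)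
    convert this using 1 <;> ext <;> simp [pow_two]
  exact h1.fderiv

/-- The feasible set of the MPVC with `g(x) = x₁ + x₂`, `H(x) = x₁`, `G(x) = x₁² - x₂²`
(so the vanishing constraint reads `G(x)·H(x) = (x₁² - x₂²)·x₁ ≤ 0`). -/
def feasEx3 : Set (ℝ × ℝ) :=
  {x | x.1 + x.2 ≤ 0 ∧ 0 ≤ x.1 ∧ (x.1 ^ 2 - x.2 ^ 2) * x.1 ≤ 0}

/-- For the MPVC with `g(x) = x₁ + x₂`, `H(x) = x₁`, `G(x) = x₁² - x₂²`,
the point `x* = (0,0)` is feasible and MPVC-generalized quasinormality fails at `x*`: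
the nonzero multiplier `(λ, η^G, η^H) = (0, 1, 0)` satisfies conditions (i)–(ii) at `x*`
(note `∇G(x*) = (0,0)`), and the sequence `x^k = (1/k, 0) → x*` satisfies the sequence
condition (iii) of quasinormality, since `G(x^k) = 1/k² > 0` for all `k`. -/
theorem example3_genQuasinormal_fails :
    ((0:ℝ), (0:ℝ)) ∈ feasEx3
    ∧ ∃ lam etaG etaH : ℝ,
        (lam, etaG, etaH) = ((0:ℝ), (1:ℝ), (0:ℝ))
        ∧ ¬(lam = 0 ∧ etaG = 0 ∧ etaH = 0)
        ∧ lam • fderiv ℝ (fun x : ℝ × ℝ => x.1 + x.2) ((0:ℝ), (0:ℝ))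
            + etaG • fderiv ℝ (fun x : ℝ × ℝ => x.1 ^ 2 - x.2 ^ 2) ((0:ℝ), (0:ℝ))
            - etaH • fderiv ℝ (fun x : ℝ × ℝ => x.1) ((0:ℝ), (0:ℝ)) = 0
        ∧ 0 ≤ lam ∧ 0 ≤ etaG ∧ etaH * etaG = 0
        ∧ ∃ xk : ℕ → ℝ × ℝ,
            (∀ k : ℕ, xk k = (1 / ((k : ℝ) + 1), 0))
            ∧ Tendsto xk atTop (𝓝 ((0:ℝ), (0:ℝ)))
            ∧ ∀ k, (0 < lam → 0 < lam * ((xk k).1 + (xk k).2))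
                ∧ (etaH ≠ 0 → etaH * (xk k).1 < 0)
                ∧ (0 < etaG → 0 < etaG * ((xk k).1 ^ 2 - (xk k).2 ^ 2)) := by
  refine ⟨⟨by norm_num, le_refl 0, by norm_num⟩, 0, 1, 0, rfl, by norm_num, ?_, le_refl 0, zero_le_one, by ring, fun k => (1 / ((k : ℝ) + 1), 0), fun k => rfl, ?_, ?_⟩
  · rw [fderivG_zero]
    simp
  · refine Tendsto.prodMk_nhds ?_ tendsto_const_nhds
    exact tendsto_one_div_add_atTop_nhds_zero_nat
  · intro k
    refine ⟨fun h => absurd h (lt_irrefl 0), fun h => absurd rfl h, fun _ => ?_⟩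
    have : (0:ℝ) < 1 / ((k : ℝ) + 1) := by positivity
    simp only
    nlinarith
end

section
/- Let Ω = {(a,b) ∈ ℝ² : b ≥ 0 and ab ≤ 0}. For every (a,b) ∈ ℝ², the distance from (a,b) to Ω with respect to the ℓ¹-norm equals max{0, −b, min{a, b}}. -/
open Filter Topology

/-- For every `(a,b) ∈ ℝ²`, the ℓ¹-distance from `(a,b)` to `Ω` equals
`max{0, -b, min{a, b}}`. -/
theorem l1DistOmega_eq (a b : ℝ) :
    l1DistOmega (a, b) = max 0 (max (-b) (min a b)) := by
  set M := max 0 (max (-b) (min a b)) with hM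
  have hbdd : BddBelow ((fun w : ℝ × ℝ => |a - w.1| + |b - w.2|) '' OmegaVC) := by
    refine ⟨0, ?_⟩
    rintro x ⟨w, _, rfl⟩
    positivity
  have hlb : ∀ x ∈ ((fun w : ℝ × ℝ => |a - w.1| + |b - w.2|) '' OmegaVC), M ≤ x := by
    rintro x ⟨⟨u, v⟩, ⟨hv, huv⟩, rfl⟩
    simp only [hM, max_le_iff]
    refine ⟨by positivity, ?_, ?_⟩
    · have h1 : v - b ≤ |b - v| := by rw [abs_sub_comm]; exact le_abs_self _
      have h2 := abs_nonneg (a - u)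
      simp only at hv ⊢
      linarith
    · simp only at hv huv ⊢
      rcases le_or_gt u 0 with hu | hu
      · have h1 : a - u ≤ |a - u| := le_abs_self _
        have h2 := abs_nonneg (b - v)
        have h3 := min_le_left a b
        linarith
      · have hv0 : v = 0 := by nlinarith
        have h1 : b ≤ |b - v| := by rw [hv0, sub_zero]; exact le_abs_self b
        have h2 := abs_nonneg (a - u)
        have h3 := min_le_right a b
        linarith
  have hmem : ∃ w ∈ OmegaVC, |a - w.1| + |b - w.2| = M := by
    rcases le_or_gt b 0 with hb | hb
    · refine ⟨(a, 0), ⟨le_refl 0, by simp⟩, ?_⟩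
      have hMe : M = -b := by
        have h3 := min_le_right a b
        refine le_antisymm (max_le (by linarith) (max_le le_rfl (by linarith))) ?_
        exact le_max_of_le_right (le_max_left _ _)
      simp [hMe, abs_of_nonpos hb]
    · rcases le_or_gt a 0 with ha | ha
      · refine ⟨(a, b), ⟨le_of_lt hb, by nlinarith⟩, ?_⟩
        have hMe : M = 0 := by
          have h3 := min_le_left a b
          exact le_antisymm (max_le le_rfl (max_le (by linarith) (by linarith)))
            (le_max_left _ _)
        simp [hMe]
      · rcases le_or_gt a b with hab | hab
        · refine ⟨(0, b), ⟨le_of_lt hb, by simp⟩, ?_⟩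
          have hMe : M = a := by
            have hmin : min a b = a := min_eq_left hab
            rw [hM, hmin]
            rw [max_eq_right (show -b ≤ a by linarith), max_eq_right ha.le]
          simp [hMe, abs_of_pos ha]
        · refine ⟨(a, 0), ⟨le_refl 0, by simp⟩, ?_⟩
          have hMe : M = b := by
            have hmin : min a b = b := min_eq_right (le_of_lt hab)
            rw [hM, hmin]
            rw [max_eq_right (show -b ≤ b by linarith), max_eq_right hb.le]
          simp [hMe, abs_of_pos hb]
  obtain ⟨w, hw, hval⟩ := hmem
  have hne : ((fun w : ℝ × ℝ => |a - w.1| + |b - w.2|) '' OmegaVC).Nonempty :=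
    ⟨_, Set.mem_image_of_mem _ hw⟩
  unfold l1DistOmega
  refine le_antisymm ?_ (le_csInf hne hlb)
  calc sInf ((fun w : ℝ × ℝ => |a - w.1| + |b - w.2|) '' OmegaVC)
      ≤ |a - w.1| + |b - w.2| := csInf_le hbdd (Set.mem_image_of_mem _ hw)
    _ = M := hval
end

section
/- Let F : ℝ^n → ℝ^t be continuously differentiable, let Δ ⊆ ℝ^t be a nonempty closed set, let x* satisfy F(x*) ∈ Δ, and define the perturbation map M(p) = {x ∈ ℝ^n : F(x) + p ∈ Δ} for p ∈ ℝ^t (so M(0) = F⁻¹(Δ)). Then the following are equivalent: (1) M is calm at (0, x*), i.e., there exist neighborhoods U of 0 in ℝ^t and V of x* in ℝ^n and a constant L ≥ 0 such that for all p ∈ U and all x ∈ M(p) ∩ V there exists y ∈ M(0) with ‖x − y‖ ≤ L‖p‖; (2) a local error bound holds at x*, i.e., there exist δ > 0 and c > 0 such that dist(x, F⁻¹(Δ)) ≤ c·dist(F(x), Δ) for all x with ‖x − x*‖ < δ. -/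
open Filter Topology

/-- Let `F : ℝⁿ → ℝᵗ` be continuously differentiable, `Δ ⊆ ℝᵗ` nonempty and
closed, and `F(x*) ∈ Δ`. For the perturbation map `M(p) = {x : F(x) + p ∈ Δ}` (so
`M(0) = F⁻¹(Δ)`), calmness of `M` at `(0, x*)` is equivalent to a local error bound at `x*`. -/
theorem calm_iff_local_error_bound {n t : ℕ}
    (F : (Fin n → ℝ) → (Fin t → ℝ)) (hF : ContDiff ℝ 1 F)
    (Δ : Set (Fin t → ℝ)) (hΔclosed : IsClosed Δ) (hΔne : Δ.Nonempty)
    (xs : Fin n → ℝ) (hxs : F xs ∈ Δ) :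
    (∃ (U : Set (Fin t → ℝ)) (V : Set (Fin n → ℝ)) (L : ℝ),
        U ∈ 𝓝 (0 : Fin t → ℝ) ∧ V ∈ 𝓝 xs ∧ 0 ≤ L ∧
        ∀ p ∈ U, ∀ x ∈ V, F x + p ∈ Δ →
          ∃ y : Fin n → ℝ, F y ∈ Δ ∧ ‖x - y‖ ≤ L * ‖p‖)
    ↔ (∃ δ c : ℝ, 0 < δ ∧ 0 < c ∧
        ∀ x : Fin n → ℝ, ‖x - xs‖ < δ →
          Metric.infDist x (F ⁻¹' Δ) ≤ c * Metric.infDist (F x) Δ) := by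
  have hFc : Continuous F := hF.continuous
  constructor
  · rintro ⟨U, V, L, hU, hV, hL, hcalm⟩
    -- choose ε with ball 0 ε ⊆ U
    obtain ⟨ε, hε, hεU⟩ := Metric.mem_nhds_iff.1 hU
    obtain ⟨δ₁, hδ₁, hδ₁V⟩ := Metric.mem_nhds_iff.1 hV
    -- continuity of F at xs
    have hcont := Metric.continuousAt_iff.1 (hFc.continuousAt (x := xs)) ε hε
    obtain ⟨δ₂, hδ₂, hδ₂F⟩ := hcont
    refine ⟨min δ₁ δ₂, max L 1, lt_min hδ₁ hδ₂, lt_of_lt_of_le one_pos (le_max_right _ _), ?_⟩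
    intro x hx
    have hx1 : dist x xs < δ₁ := lt_of_lt_of_le (by rwa [dist_eq_norm]) (min_le_left _ _)
    have hx2 : dist x xs < δ₂ := lt_of_lt_of_le (by rwa [dist_eq_norm]) (min_le_right _ _)
    -- closest point of Δ to F x
    obtain ⟨d, hd, hdist⟩ := hΔclosed.exists_infDist_eq_dist hΔne (F x)
    set p : Fin t → ℝ := d - F x with hp
    have hFxp : F x + p ∈ Δ := by simpa [hp] using hd
    have hpnorm : ‖p‖ = Metric.infDist (F x) Δ := by
      rw [hdist, dist_eq_norm, hp, norm_sub_rev]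
    have hple : ‖p‖ < ε := by
      rw [hpnorm]
      calc Metric.infDist (F x) Δ ≤ dist (F x) (F xs) := Metric.infDist_le_dist_of_mem hxs
        _ < ε := hδ₂F hx2
    have hpU : p ∈ U := hεU (by simpa [Metric.mem_ball, dist_eq_norm] using hple)
    have hxV : x ∈ V := hδ₁V (by simpa [Metric.mem_ball] using hx1)
    obtain ⟨y, hyΔ, hxy⟩ := hcalm p hpU x hxV hFxp
    calc Metric.infDist x (F ⁻¹' Δ) ≤ dist x y := Metric.infDist_le_dist_of_mem hyΔ
      _ = ‖x - y‖ := dist_eq_norm _ _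
      _ ≤ L * ‖p‖ := hxy
      _ ≤ max L 1 * Metric.infDist (F x) Δ := by
          rw [hpnorm] at hxy ⊢
          exact mul_le_mul_of_nonneg_right (le_max_left _ _)
            (Metric.infDist_nonneg)
  · rintro ⟨δ, c, hδ, hc, herr⟩
    refine ⟨Set.univ, Metric.ball xs δ, c, Filter.univ_mem, Metric.ball_mem_nhds _ hδ, hc.le, ?_⟩
    intro p _ x hx hmem
    have hxδ : ‖x - xs‖ < δ := by simpa [Metric.mem_ball, dist_eq_norm] using hx
    have hb : Metric.infDist x (F ⁻¹' Δ) ≤ c * ‖p‖ := by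
      calc Metric.infDist x (F ⁻¹' Δ) ≤ c * Metric.infDist (F x) Δ := herr x hxδ
        _ ≤ c * ‖p‖ := by
            refine mul_le_mul_of_nonneg_left ?_ hc.le
            calc Metric.infDist (F x) Δ ≤ dist (F x) (F x + p) :=
                  Metric.infDist_le_dist_of_mem hmem
              _ = ‖p‖ := by simp [dist_eq_norm]
    -- F ⁻¹' Δ is closed nonempty, space is proper: attain infDist
    have hclosed : IsClosed (F ⁻¹' Δ) := hΔclosed.preimage hFc
    obtain ⟨y, hy, hyd⟩ := hclosed.exists_infDist_eq_dist ⟨xs, hxs⟩ x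
    exact ⟨y, hy, by rw [← dist_eq_norm, ← hyd]; exact hb⟩
end
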